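/- arXiv:1001.1945 — 8 statements merged into one kernel-verified Lean document; each statement's English description precedes it below -/
import Mathlib

section
/- Let B be a local ring with maximal ideal m_B, G a finite group acting on B, σ ∈ G, and I_G the ideal of B generated by {σ(b) − b : b ∈ B, σ ∈ G}. If I_G is a principal ideal of B, then there exists y ∈ B such that I_G is generated by σ(y) − y for a fixed generator σ (i.e., the augmentation ideal admits an augmentation generator). -/
/-- If the augmentation ideal of a `p`-cyclic action on a local ring is
principal, then it admits an augmentation generator: there is `y ∈ B` with
`I_G = B·(σ • y − y)` for the fixed generator `σ` of `G`. -/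
theorem exists_augmentation_generator_of_principal
    {B : Type*} [CommRing B] [IsLocalRing B]
    {G : Type*} [Group G] [Fintype G] [MulSemiringAction G B]
    (p : ℕ) (hp : p.Prime) (hcard : Nat.card G = p)
    (hloc : ∀ (g : G), ∀ b ∈ IsLocalRing.maximalIdeal B,
      g • b ∈ IsLocalRing.maximalIdeal B)
    (σ : G) (hσ : ∀ g : G, g ∈ Subgroup.zpowers σ)
    (IG : Ideal B) (hIG : IG = Ideal.span {x | ∃ (g : G) (b : B), x = g • b - b})
    (hprin : IG.IsPrincipal) :
    ∃ y : B, IG = Ideal.span {σ • y - y} := by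
  classical
  -- Step 1: IG is generated by σ-differences alone.
  have hspan : IG = Ideal.span {x | ∃ b : B, x = σ • b - b} := by
    rw [hIG]
    apply le_antisymm
    · rw [Ideal.span_le]
      rintro x ⟨g, b, rfl⟩
      have hg : g ∈ Submonoid.powers σ := by
        rw [mem_powers_iff_mem_zpowers]; exact hσ g
      obtain ⟨n, rfl⟩ := hg
      induction n generalizing b with
      | zero => simp
      | succ n ih =>
        have hsplit : σ ^ (n + 1) • b - b
            = (σ • (σ ^ n • b) - σ ^ n • b) + (σ ^ n • b - b) := by
          rw [pow_succ', mul_smul]; ring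
        rw [hsplit]
        exact Ideal.add_mem _ (Ideal.subset_span ⟨σ ^ n • b, rfl⟩) (ih b)
    · rw [Ideal.span_le]
      rintro x ⟨b, rfl⟩
      exact Ideal.subset_span ⟨σ, b, rfl⟩
  obtain ⟨x, hx⟩ := hprin
  by_cases hy : ∃ y : B, σ • y - y ∉ IsLocalRing.maximalIdeal B • IG
  · obtain ⟨y, hy⟩ := hy
    refine ⟨y, ?_⟩
    have hmem : σ • y - y ∈ IG := by
      rw [hspan]; exact Ideal.subset_span ⟨y, rfl⟩
    have hmem' : σ • y - y ∈ Ideal.span {x} := by rwa [hx] at hmem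
    obtain ⟨u, hu⟩ := Ideal.mem_span_singleton'.mp hmem'
    have hux : IsUnit u := by
      by_contra h
      apply hy
      have hum : u ∈ IsLocalRing.maximalIdeal B := h
      have hxI : x ∈ IG := by rw [hx]; exact Ideal.mem_span_singleton_self x
      rw [← hu]
      exact Submodule.smul_mem_smul hum hxI
    have key : Ideal.span {x} = Ideal.span {σ • y - y} := by
      apply le_antisymm
      · rw [Ideal.span_le, Set.singleton_subset_iff]
        refine Ideal.mem_span_singleton'.mpr ⟨↑hux.unit⁻¹, ?_⟩
        rw [← hu, ← mul_assoc, IsUnit.val_inv_mul, one_mul]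
      · rw [Ideal.span_le, Set.singleton_subset_iff]
        exact hmem'
    rw [hx]
    exact key
  · push_neg at hy
    have hle : IG ≤ IsLocalRing.maximalIdeal B • IG := by
      conv_lhs => rw [hspan]
      rw [Ideal.span_le]
      rintro x ⟨b, rfl⟩
      exact hy b
    have hfg : IG.FG := ⟨{x}, by rw [hx]; simp⟩
    have hbot : IG = ⊥ :=
      Submodule.eq_bot_of_le_smul_of_le_jacobson_bot (IsLocalRing.maximalIdeal B) IG hfg hle
        (le_of_eq (IsLocalRing.jacobson_eq_maximalIdeal ⊥ bot_ne_top).symm)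
    refine ⟨0, by rw [hbot]; symm; rw [show σ • (0 : B) - 0 = 0 by simp]; exact Ideal.span_singleton_eq_bot.mpr rfl⟩
end

section
/- Let σ be a ring automorphism of a commutative ring B of order dividing p, y ∈ B, and define for n ≥ 0 and i ≥ n the element y_i^{(n)} := Σ_{0 ≤ k₁ ≤ … ≤ k_{i−n} ≤ n} ∏_{j=1}^{i−n} σ^{k_j}(y) (the sum over weakly increasing (i−n)-tuples of exponents in {0,…,n}; for i = n the empty product gives y_n^{(n)} = 1). Then for all n and i ≥ n, σ(y_i^{(n)}) − y_i^{(n)} = (σ^{n+1}(y) − y) · y_i^{(n+1)}. -/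
/-- `auxY σ y n i = ∑_{0 ≤ k₁ ≤ … ≤ k_{i−n} ≤ n} ∏_{j=1}^{i−n} σ^{k_j}(y)`,
the sum over weakly increasing `(i−n)`-tuples of exponents in `{0,…,n}`
(and `0` when `i < n`). -/
noncomputable def auxY {B : Type*} [CommRing B] (σ : B ≃+* B) (y : B) (n i : ℕ) : B :=
  if n ≤ i then
    ∑ k ∈ Finset.univ.filter (fun k : Fin (i - n) → Fin (n + 1) => Monotone k),
      ∏ j, (σ ^ ((k j : ℕ))) y
  else 0

section Aux

variable {B : Type*} [CommRing B] (σ : B ≃+* B) (y : B)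

variable {B : Type*} [CommRing B] (σ : B ≃+* B) (y : B)

noncomputable def auxS (σ : B ≃+* B) (y : B) (m N : ℕ) : B :=
  ∑ k ∈ Finset.univ.filter (fun k : Fin m → Fin (N + 1) => Monotone k),
    ∏ j, (σ ^ ((k j : ℕ))) y

lemma auxS_zero (N : ℕ) : auxS σ y 0 N = 1 := by
  rw [auxS]
  rw [Finset.filter_true_of_mem (fun k _ => (Subsingleton.monotone k : Monotone k))]
  simp

lemma monotone_snoc_last {m N : ℕ} {g : Fin m → Fin (N + 2)} (hg : Monotone g) :
    Monotone (Fin.snoc g (Fin.last (N + 1))) := by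
  intro a b hab
  by_cases hb : b = Fin.last m
  · subst hb
    simp only [Fin.snoc_last]
    exact Fin.le_last _
  · obtain ⟨b', rfl⟩ := Fin.exists_castSucc_eq.mpr hb
    have ha : a ≠ Fin.last m := by
      rintro rfl
      exact hb (Fin.le_antisymm (Fin.le_last _) hab)
    obtain ⟨a', rfl⟩ := Fin.exists_castSucc_eq.mpr ha
    simp only [Fin.snoc_castSucc]
    exact hg (by simpa using hab)

lemma monotone_init {m N : ℕ} {k : Fin (m + 1) → Fin (N + 2)} (hk : Monotone k) :
    Monotone (Fin.init k) := fun a b hab => hk (by simpa using hab)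

lemma part1 (m N : ℕ) :
    ∑ k ∈ (Finset.univ.filter (fun k : Fin (m + 1) → Fin (N + 2) => Monotone k)).filter
        (fun k => k (Fin.last m) = Fin.last (N + 1)),
      ∏ j, (σ ^ ((k j : ℕ))) y
    = (σ ^ (N + 1)) y * auxS σ y m (N + 1) := by
  rw [auxS, Finset.mul_sum]
  refine Finset.sum_bij' (fun k _ => Fin.init k) (fun g _ => Fin.snoc g (Fin.last (N + 1)))
    ?_ ?_ ?_ ?_ ?_
  · intro k hk
    simp only [Finset.mem_filter, Finset.mem_univ, true_and] at hk ⊢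
    exact monotone_init hk.1
  · intro g hg
    simp only [Finset.mem_filter, Finset.mem_univ, true_and] at hg ⊢
    exact ⟨monotone_snoc_last hg, Fin.snoc_last _ _⟩
  · intro k hk
    simp only [Finset.mem_filter, Finset.mem_univ, true_and] at hk
    conv_rhs => rw [← Fin.snoc_init_self k]
    exact congrArg _ hk.2.symm
  · intro g _
    exact Fin.init_snoc _ _
  · intro k hk
    simp only [Finset.mem_filter, Finset.mem_univ, true_and] at hk
    rw [Fin.prod_univ_castSucc, hk.2, mul_comm]
    simp [Fin.init]

lemma part2 (m N : ℕ) :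
    ∑ k ∈ (Finset.univ.filter (fun k : Fin (m + 1) → Fin (N + 2) => Monotone k)).filter
        (fun k => ¬ k (Fin.last m) = Fin.last (N + 1)),
      ∏ j, (σ ^ ((k j : ℕ))) y
    = auxS σ y (m + 1) N := by
  rw [auxS]
  refine Finset.sum_bij' (fun k hk => fun x => (k x).castLT ?_)
    (fun g _ => fun x => (g x).castSucc) ?_ ?_ ?_ ?_ ?_
  · have hk' := Finset.mem_filter.mp hk
    have hmono : Monotone k := (Finset.mem_filter.mp hk'.1).2
    have h1 : k x ≤ k (Fin.last m) := hmono (Fin.le_last x)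
    have h2 : k (Fin.last m) < Fin.last (N + 1) := Fin.lt_last_iff_ne_last.mpr hk'.2
    exact lt_of_le_of_lt h1 h2
  · intro k hk
    have hmono : Monotone k := (Finset.mem_filter.mp (Finset.mem_filter.mp hk).1).2
    simp only [Finset.mem_filter, Finset.mem_univ, true_and]
    intro a b hab
    exact hmono hab
  · intro g hg
    simp only [Finset.mem_filter, Finset.mem_univ, true_and] at hg ⊢
    constructor
    · exact fun a b hab => Fin.castSucc_le_castSucc_iff.mpr (hg hab)
    · exact Fin.ne_of_lt (Fin.castSucc_lt_last _)
  · intro k hk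
    funext x
    exact Fin.castSucc_castLT _ _
  · intro g hg
    funext x
    exact Fin.castLT_castSucc _ _
  · intro k hk
    exact Finset.prod_congr rfl fun j _ => rfl

lemma auxS_rec1 (m N : ℕ) :
    auxS σ y (m + 1) (N + 1) =
      (σ ^ (N + 1)) y * auxS σ y m (N + 1) + auxS σ y (m + 1) N := by
  rw [auxS,
    ← Finset.sum_filter_add_sum_filter_not _ (fun k => k (Fin.last m) = Fin.last (N + 1)),
    part1, part2]

lemma monotone_cons_zero {m N : ℕ} {g : Fin m → Fin (N + 2)} (hg : Monotone g) :
    Monotone (Fin.cons 0 g : Fin (m + 1) → Fin (N + 2)) := by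
  intro a b hab
  induction b using Fin.cases with
  | zero =>
    have : a = 0 := Fin.le_antisymm hab (Fin.zero_le a)
    subst this
    exact le_refl _
  | succ b' =>
    induction a using Fin.cases with
    | zero => simp only [Fin.cons_zero]; exact Fin.zero_le _
    | succ a' =>
      simp only [Fin.cons_succ]
      exact hg (by simpa using hab)

lemma part3 (m N : ℕ) :
    ∑ k ∈ (Finset.univ.filter (fun k : Fin (m + 1) → Fin (N + 2) => Monotone k)).filter
        (fun k => k 0 = 0),
      ∏ j, (σ ^ ((k j : ℕ))) y
    = y * auxS σ y m (N + 1) := by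
  rw [auxS, Finset.mul_sum]
  refine Finset.sum_bij' (fun k _ => Fin.tail k) (fun g _ => Fin.cons 0 g) ?_ ?_ ?_ ?_ ?_
  · intro k hk
    simp only [Finset.mem_filter, Finset.mem_univ, true_and] at hk ⊢
    exact fun a b hab => hk.1 (by simpa using (Fin.succ_le_succ_iff.mpr hab))
  · intro g hg
    simp only [Finset.mem_filter, Finset.mem_univ, true_and] at hg ⊢
    exact ⟨monotone_cons_zero hg, Fin.cons_zero _ _⟩
  · intro k hk
    simp only [Finset.mem_filter, Finset.mem_univ, true_and] at hk
    conv_rhs => rw [← Fin.cons_self_tail k]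
    exact congrArg (fun z => Fin.cons z (Fin.tail k)) hk.2.symm
  · intro g _
    exact Fin.tail_cons _ _
  · intro k hk
    simp only [Finset.mem_filter, Finset.mem_univ, true_and] at hk
    rw [Fin.prod_univ_succ, hk.2]
    simp only [Fin.val_zero, pow_zero, Fin.tail]
    rfl

lemma sigma_auxS (m N : ℕ) :
    σ (auxS σ y m N) =
      ∑ g ∈ Finset.univ.filter (fun g : Fin m → Fin (N + 1) => Monotone g),
        ∏ x, (σ ^ ((g x : ℕ) + 1)) y := by
  rw [auxS, map_sum]
  refine Finset.sum_congr rfl fun g _ => ?_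
  rw [map_prod]
  refine Finset.prod_congr rfl fun x _ => ?_
  rw [pow_succ']
  rfl

lemma part4 (m N : ℕ) :
    ∑ k ∈ (Finset.univ.filter (fun k : Fin (m + 1) → Fin (N + 2) => Monotone k)).filter
        (fun k => ¬ k 0 = 0),
      ∏ j, (σ ^ ((k j : ℕ))) y
    = σ (auxS σ y (m + 1) N) := by
  rw [sigma_auxS]
  refine Finset.sum_bij' (fun k hk => fun x => (k x).pred ?_)
    (fun g _ => fun x => (g x).succ) ?_ ?_ ?_ ?_ ?_
  · have hk' := Finset.mem_filter.mp hk
    have hmono : Monotone k := (Finset.mem_filter.mp hk'.1).2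
    have h1 : k 0 ≤ k x := hmono (Fin.zero_le x)
    intro h0
    exact hk'.2 (Fin.le_antisymm (h0 ▸ h1) (Fin.zero_le _))
  · intro k hk
    have hmono : Monotone k := (Finset.mem_filter.mp (Finset.mem_filter.mp hk).1).2
    simp only [Finset.mem_filter, Finset.mem_univ, true_and]
    exact fun a b hab => Fin.pred_le_pred_iff.mpr (hmono hab)
  · intro g hg
    simp only [Finset.mem_filter, Finset.mem_univ, true_and] at hg ⊢
    exact ⟨fun a b hab => Fin.succ_le_succ_iff.mpr (hg hab), Fin.succ_ne_zero _⟩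
  · intro k hk
    funext x
    exact Fin.succ_pred _ _
  · intro g hg
    funext x
    exact Fin.pred_succ _
  · intro k hk
    refine Finset.prod_congr rfl fun j _ => ?_
    congr 1
    rw [Fin.coe_pred]
    have hj : (k j : ℕ) ≠ 0 := by
      intro h
      have hk' := Finset.mem_filter.mp hk
      have hmono : Monotone k := (Finset.mem_filter.mp hk'.1).2
      have h1 : k 0 ≤ k j := hmono (Fin.zero_le j)
      have h2 : (k 0 : ℕ) ≤ (k j : ℕ) := h1
      exact hk'.2 (by rw [Fin.ext_iff, Fin.val_zero]; omega)
    congr 1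
    omega

lemma auxS_rec2 (m N : ℕ) :
    auxS σ y (m + 1) (N + 1) =
      y * auxS σ y m (N + 1) + σ (auxS σ y (m + 1) N) := by
  rw [auxS, ← Finset.sum_filter_add_sum_filter_not _ (fun k => k 0 = 0), part3, part4]

lemma auxY_eq_auxS (n i : ℕ) (h : n ≤ i) : auxY σ y n i = auxS σ y (i - n) n := by
  rw [auxY, if_pos h, auxS]

end Aux

/-- For all `n` and `i ≥ n`,
`σ(y_i^{(n)}) − y_i^{(n)} = (σ^{n+1}(y) − y) · y_i^{(n+1)}`. -/
theorem augmentation_of_auxY {B : Type*} [CommRing B] (σ : B ≃+* B) (p : ℕ)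
    (hp : p.Prime) (hσ : σ ^ p = 1) (y : B) (n i : ℕ) (hni : n ≤ i) :
    σ (auxY σ y n i) - auxY σ y n i = ((σ ^ (n + 1)) y - y) * auxY σ y (n + 1) i := by
  rcases eq_or_lt_of_le hni with rfl | hlt
  · have h1 : auxY σ y n n = 1 := by
      rw [auxY_eq_auxS σ y n n le_rfl, Nat.sub_self, auxS_zero]
    have h2 : auxY σ y (n + 1) n = 0 := by rw [auxY, if_neg (by omega)]
    rw [h1, h2, map_one, mul_zero, sub_self]
  · obtain ⟨m, rfl⟩ : ∃ m, i = n + 1 + m := ⟨i - (n + 1), by omega⟩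
    have e1 : auxY σ y n (n + 1 + m) = auxS σ y (m + 1) n := by
      rw [auxY_eq_auxS σ y n _ (by omega)]
      congr 1
      omega
    have e2 : auxY σ y (n + 1) (n + 1 + m) = auxS σ y m (n + 1) := by
      rw [auxY_eq_auxS σ y (n + 1) _ (by omega)]
      congr 1
      omega
    rw [e1, e2]
    linear_combination (auxS_rec1 σ y m n) - (auxS_rec2 σ y m n)
end

section
/- Let B be a local ring, G a cyclic group of prime order p acting on B by local automorphisms with generator σ, and suppose the augmentation ideal I_G = B·(σ(y) − y) is generated by σ(y) − y for some y ∈ B. Then for each n with 0 ≤ n ≤ p − 2, the element y_{n+1}^{(n)} = Σ_{j=1}^{n+1} σ^{j−1}(y) is again an augmentation generator, i.e., I_G = B·(σ(y_{n+1}^{(n)}) − y_{n+1}^{(n)}). -/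
private lemma telescope_aux {B : Type*} [CommRing B] {G : Type*} [Group G]
    [MulSemiringAction G B] (g : G) (m : ℕ) (b : B) :
    g ^ m • b - b = ∑ j ∈ Finset.range m, (g ^ j • (g • b) - g ^ j • b) := by
  have h := Finset.sum_range_sub (f := fun j => (g ^ j : G) • b) (n := m)
  simp only [pow_zero, one_smul] at h
  rw [← h]
  refine Finset.sum_congr rfl fun j _ => ?_
  rw [pow_succ, mul_smul]

/-- If `y` is an augmentation generator for a `p`-cyclic action by local
automorphisms on a local ring `B`, then for `0 ≤ n ≤ p − 2` the element
`y_{n+1}^{(n)} = ∑_{j=1}^{n+1} σ^{j−1}(y)` is again an augmentation generator. -/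
theorem augmentation_generator_of_partial_trace
    {B : Type*} [CommRing B] [IsLocalRing B]
    {G : Type*} [Group G] [Fintype G] [MulSemiringAction G B]
    (p : ℕ) (hp : p.Prime) (hcard : Nat.card G = p)
    (hloc : ∀ (g : G), ∀ b ∈ IsLocalRing.maximalIdeal B,
      g • b ∈ IsLocalRing.maximalIdeal B)
    (σ : G) (hσ : ∀ g : G, g ∈ Subgroup.zpowers σ)
    (IG : Ideal B) (hIG : IG = Ideal.span {x | ∃ (g : G) (b : B), x = g • b - b})
    (y : B) (hy : IG = Ideal.span {σ • y - y})
    (n : ℕ) (hn : n ≤ p - 2) :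
    IG = Ideal.span
      {σ • (∑ j ∈ Finset.range (n + 1), (σ ^ j) • y) -
        ∑ j ∈ Finset.range (n + 1), (σ ^ j) • y} := by
  classical
  set t : B := σ • y - y with ht
  set s : B := σ ^ (n + 1) • y - y with hs
  -- the goal element is s
  have helem : σ • (∑ j ∈ Finset.range (n + 1), (σ ^ j) • y) -
      ∑ j ∈ Finset.range (n + 1), (σ ^ j) • y = s := by
    rw [hs, telescope_aux σ (n+1) y, Finset.smul_sum, ← Finset.sum_sub_distrib]
    refine Finset.sum_congr rfl fun j _ => ?_
    rw [← mul_smul, ← mul_smul, ((Commute.refl σ).pow_right j).eq]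
  rw [helem]
  -- commutativity with σ
  have hcomm : ∀ g : G, g * σ = σ * g := by
    intro g
    obtain ⟨m, hm⟩ := hσ g
    simp only at hm
    rw [← hm, ← zpow_one_add, ← zpow_add_one, add_comm]
  -- Fact 1 : for every g, g • t ∈ Ideal.span {t}
  have fact1 : ∀ g : G, g • t ∈ Ideal.span {t} := by
    intro g
    have hgt : g • t = σ • (g • y) - g • y := by
      rw [ht, smul_sub, ← mul_smul, hcomm, mul_smul]
    rw [← hy, hIG]
    exact Ideal.subset_span ⟨σ, g • y, hgt⟩
  -- s ∈ span {t}
  have hsmem : s ∈ Ideal.span {t} := by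
    rw [hs, telescope_aux σ (n+1) y]
    refine Ideal.sum_mem _ fun j _ => ?_
    have h2 : σ ^ j • (σ • y) - σ ^ j • y = (σ ^ j) • t := by
      rw [ht, smul_sub]
    rw [h2]
    exact fact1 _
  have hle : Ideal.span {s} ≤ IG := by
    rw [hy]
    exact Ideal.span_le.mpr (Set.singleton_subset_iff.mpr hsmem)
  -- reverse: t ∈ span {s}
  have htmem : t ∈ Ideal.span {s} := by
    by_cases hσ1 : σ = 1
    · have ht0 : t = 0 := by rw [ht, hσ1, one_smul, sub_self]
      rw [ht0]; exact Ideal.zero_mem _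
    have hord : orderOf σ = p := by
      have h1 : orderOf σ ∣ p := hcard ▸ orderOf_dvd_natCard σ
      rcases (Nat.Prime.eq_one_or_self_of_dvd hp _ h1) with h | h
      · exact absurd (orderOf_eq_one_iff.mp h) hσ1
      · exact h
    have hp2 := hp.two_le
    have hlt : n + 1 < p := by omega
    haveI := Fact.mk hp
    obtain ⟨k, hk⟩ : ∃ k : ℕ, (σ ^ (n+1)) ^ k = σ := by
      refine ⟨((n+1 : ZMod p))⁻¹.val, ?_⟩
      rw [← pow_mul]
      have hmod : (n+1) * ((n+1 : ZMod p))⁻¹.val ≡ 1 [MOD p] := by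
        have hne : ((n+1 : ℕ) : ZMod p) ≠ 0 := by
          rw [Ne, ZMod.natCast_eq_zero_iff]
          exact Nat.not_dvd_of_pos_of_lt (by omega) hlt
        have hcast : (((n+1) * ((n+1 : ZMod p))⁻¹.val : ℕ) : ZMod p) = ((1:ℕ) : ZMod p) := by
          push_cast
          rw [ZMod.natCast_val, ZMod.cast_id]
          push_cast at hne
          field_simp
        exact (ZMod.natCast_eq_natCast_iff _ _ _).mp hcast
      calc σ ^ ((n+1) * ((n+1 : ZMod p))⁻¹.val) = σ ^ 1 :=
            (pow_eq_pow_iff_modEq).mpr (by rwa [hord])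
        _ = σ := pow_one σ
    set τ : G := σ ^ (n + 1) with hτ
    obtain ⟨c, hc⟩ := Ideal.mem_span_singleton'.mp hsmem
    -- t = ∑_{j<k} τ^j • s
    have hts : t = ∑ j ∈ Finset.range k, (τ ^ j) • s := by
      have h3 := telescope_aux τ k y
      rw [hk] at h3
      rw [ht, h3]
      refine Finset.sum_congr rfl fun j _ => ?_
      rw [hs, smul_sub]
    choose e he using fun j : ℕ => Ideal.mem_span_singleton'.mp (fact1 (τ ^ j))
    by_cases hcu : IsUnit c
    · refine Ideal.mem_span_singleton'.mpr ⟨(↑hcu.unit⁻¹ : B), ?_⟩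
      have h4 : (↑hcu.unit⁻¹ : B) * s = (↑hcu.unit⁻¹ : B) * (c * t) := by rw [hc]
      rw [h4, ← mul_assoc, IsUnit.val_inv_mul, one_mul]
    · -- c in maximal ideal
      have hcm : c ∈ IsLocalRing.maximalIdeal B :=
        (IsLocalRing.mem_maximalIdeal c).mpr hcu
      set u : B := ∑ j ∈ Finset.range k, (τ ^ j • c) * e j with hu
      have hterm : ∀ j : ℕ, (τ ^ j) • s = (τ ^ j • c * e j) * t := by
        intro j
        rw [← hc, smul_mul', ← he j]
        ring
      have hut : t = u * t := by
        conv_lhs => rw [hts]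
        rw [hu, Finset.sum_mul]
        exact Finset.sum_congr rfl fun j _ => hterm j
      have hum : u ∈ IsLocalRing.maximalIdeal B := by
        refine Ideal.sum_mem _ fun j _ => ?_
        exact Ideal.mul_mem_right _ _ (hloc _ c hcm)
      have h1u : IsUnit (1 - u) :=
        IsLocalRing.isUnit_one_sub_self_of_mem_nonunits u ((IsLocalRing.mem_maximalIdeal u).mp hum)
      have ht0 : t = 0 := by
        have h5 : (1 - u) * t = 0 := by rw [sub_mul, one_mul, ← hut, sub_self]
        exact (h1u.mul_right_eq_zero).mp h5
      rw [ht0]; exact Ideal.zero_mem _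
  have hge : IG ≤ Ideal.span {s} := by
    rw [hy]
    exact Ideal.span_le.mpr (Set.singleton_subset_iff.mpr htmem)
  exact le_antisymm hge hle
end

section
/- Let B be a normal local domain, G a cyclic group of prime order p acting faithfully on B by local automorphisms with invariant ring A = B^G, and suppose the augmentation ideal I_G is generated by σ(y) − y for y ∈ B (with σ(y) ≠ y). Then B decomposes as a direct sum of A-modules: B = A·y⁰ ⊕ A·y¹ ⊕ … ⊕ A·y^{p−1}; in particular B is a free A-module with basis 1, y, …, y^{p−1}. -/
private lemma aux_tel {B : Type*} [CommRing B] (τ : B ≃+* B) (z : B) (m : ℕ) :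
    (τ ^ m) z - z = ∑ i ∈ Finset.range m, (τ ^ i) (τ z - z) := by
  induction m with
  | zero =>
    have h : (1 : B ≃+* B) z = z := rfl
    simp [h]
  | succ m ih =>
    rw [Finset.sum_range_succ, ← ih]
    have h : (τ ^ (m + 1)) z = (τ ^ m) (τ z) := by rw [pow_succ]; rfl
    rw [h, map_sub]
    ring

private lemma aux_conj {B : Type*} [CommRing B] (n : ℕ) (σ : B ≃+* B)
    (horder : orderOf σ = n + 1) (x : Fin (n + 1) → B) :
    σ ((Matrix.of fun j k : Fin (n + 1) => (σ ^ (j : ℕ)) (x k)).det)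
      = (-1 : B) ^ n * (Matrix.of fun j k : Fin (n + 1) => (σ ^ (j : ℕ)) (x k)).det := by
  have h1 := RingHom.map_det (σ : B →+* B) (Matrix.of fun j k : Fin (n + 1) => (σ ^ (j : ℕ)) (x k))
  rw [show (σ : B →+* B).mapMatrix (Matrix.of fun j k : Fin (n + 1) => (σ ^ (j : ℕ)) (x k))
      = (Matrix.of fun j k : Fin (n + 1) => (σ ^ (j : ℕ)) (x k)).map ⇑σ from rfl] at h1
  have h2 : (Matrix.of fun j k : Fin (n + 1) => (σ ^ (j : ℕ)) (x k)).map σ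
      = (Matrix.of fun j k : Fin (n + 1) => (σ ^ (j : ℕ)) (x k)).submatrix (finRotate (n + 1)) id := by
    ext j k
    simp only [Matrix.map_apply, Matrix.submatrix_apply, Matrix.of_apply, id_eq,
      finRotate_succ_apply]
    have hmod : σ ^ (((j + 1 : Fin (n + 1))) : ℕ) = σ ^ ((j : ℕ) + 1) := by
      rw [pow_eq_pow_iff_modEq, horder]
      have hval : ((j + 1 : Fin (n + 1)) : ℕ) = ((j : ℕ) + 1 % (n + 1)) % (n + 1) := by
        simp [Fin.val_add, Fin.val_one']
      rw [hval]
      exact (Nat.mod_modEq _ _).trans (Nat.ModEq.add_left _ (Nat.mod_modEq 1 (n + 1)))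
    rw [hmod, pow_succ']
    rfl
  have h1' : σ ((Matrix.of fun j k : Fin (n + 1) => (σ ^ (j : ℕ)) (x k)).det)
      = ((Matrix.of fun j k : Fin (n + 1) => (σ ^ (j : ℕ)) (x k)).map ⇑σ).det := h1
  rw [h1', h2, Matrix.det_permute, sign_finRotate]
  push_cast
  ring

private lemma aux_red {B : Type*} [CommRing B] (n : ℕ) (σ : B ≃+* B) (t : B) (Δ : B → B)
    (hΔ : ∀ z, σ z - z = t * Δ z) (uu : ℕ → B) (huut : ∀ i, (σ ^ i) t = uu i * t) :
    ∀ x : Fin (n + 1) → B,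
      (Matrix.of fun j k : Fin (n + 1) => (σ ^ (j : ℕ)) (x k)).det
        = (∏ r ∈ Finset.range (n + 1), ∏ j : Fin (n + 1),
            (if (j : ℕ) ≤ r then (1 : B) else uu ((j : ℕ) - r - 1) * t))
          * (Matrix.of fun j k : Fin (n + 1) => Δ^[(j : ℕ)] (x k)).det := by
  classical
  set Cm : ℕ → Matrix (Fin (n + 1)) (Fin (n + 1)) B := fun r => Matrix.of fun j m =>
    if (m : ℕ) = (j : ℕ) ∧ (j : ℕ) ≤ r then 1
    else if (m : ℕ) = r ∧ r < (j : ℕ) then 1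
    else if r < (m : ℕ) ∧ (m : ℕ) ≤ (j : ℕ) then uu ((m : ℕ) - r - 1) * t
    else 0 with hCm
  set Gm : ℕ → (Fin (n + 1) → B) → Matrix (Fin (n + 1)) (Fin (n + 1)) B := fun r x =>
    Matrix.of fun j k =>
      if (j : ℕ) < r then Δ^[(j : ℕ)] (x k) else (σ ^ ((j : ℕ) - r)) (Δ^[r] (x k)) with hGm
  have happ : ∀ (i : ℕ) (a b : B), (σ ^ i) (a * b) = (σ ^ i) a * (σ ^ i) b :=
    fun i a b => map_mul _ _ _
  have hstep : ∀ (r : ℕ) (x : Fin (n + 1) → B), Gm r x = Cm r * Gm (r + 1) x := by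
    intro r x
    ext j k
    rw [Matrix.mul_apply]
    simp only [hCm, hGm, Matrix.of_apply]
    rcases le_or_gt (j : ℕ) r with hj | hj
    · -- row j ≤ r
      have hLHS : (if (j : ℕ) < r then Δ^[(j : ℕ)] (x k)
          else (σ ^ ((j : ℕ) - r)) (Δ^[r] (x k))) = Δ^[(j : ℕ)] (x k) := by
        rcases lt_or_eq_of_le hj with h | h
        · rw [if_pos h]
        · rw [if_neg (by omega), h, Nat.sub_self, pow_zero]
          rfl
      rw [hLHS, Finset.sum_eq_single j]
      · rw [if_pos (show (j : ℕ) = (j : ℕ) ∧ (j : ℕ) ≤ r from ⟨rfl, hj⟩), one_mul,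
          if_pos (show (j : ℕ) < r + 1 by omega)]
      · intro m _ hm
        have hmj : (m : ℕ) ≠ (j : ℕ) := fun hc => hm (Fin.val_injective hc)
        rw [if_neg (show ¬((m : ℕ) = (j : ℕ) ∧ (j : ℕ) ≤ r) from fun hc => hmj hc.1),
          if_neg (show ¬((m : ℕ) = r ∧ r < (j : ℕ)) by omega),
          if_neg (show ¬(r < (m : ℕ) ∧ (m : ℕ) ≤ (j : ℕ)) by omega), zero_mul]
      · intro h; exact absurd (Finset.mem_univ j) h
    · -- row j > r
      rw [if_neg (by omega)]
      have htel := aux_tel σ (Δ^[r] (x k)) ((j : ℕ) - r)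
      have hΔit : σ (Δ^[r] (x k)) - Δ^[r] (x k) = t * Δ^[r + 1] (x k) := by
        rw [Function.iterate_succ_apply']; exact hΔ _
      rw [hΔit] at htel
      have hLHS : (σ ^ ((j : ℕ) - r)) (Δ^[r] (x k))
          = Δ^[r] (x k) + ∑ i ∈ Finset.range ((j : ℕ) - r),
              uu i * t * (σ ^ i) (Δ^[r + 1] (x k)) := by
        rw [← sub_eq_iff_eq_add']
        rw [htel]
        refine Finset.sum_congr rfl fun i _ => ?_
        rw [happ i, huut i]
      rw [hLHS]
      -- now compute the RHS sum
      have hterm : ∀ m : Fin (n + 1),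
          (if (m : ℕ) = (j : ℕ) ∧ (j : ℕ) ≤ r then (1 : B)
            else if (m : ℕ) = r ∧ r < (j : ℕ) then 1
            else if r < (m : ℕ) ∧ (m : ℕ) ≤ (j : ℕ) then uu ((m : ℕ) - r - 1) * t
            else 0)
          * (if (m : ℕ) < r + 1 then Δ^[(m : ℕ)] (x k)
              else (σ ^ ((m : ℕ) - (r + 1))) (Δ^[r + 1] (x k)))
          = (fun v : ℕ => if v = r then Δ^[r] (x k) else 0) (m : ℕ)
            + (fun v : ℕ => if r < v ∧ v ≤ (j : ℕ) then
                (uu (v - r - 1) * t) * ((σ ^ (v - (r + 1))) (Δ^[r + 1] (x k))) else 0) (m : ℕ) := by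
        intro m
        show _ = (if (m : ℕ) = r then Δ^[r] (x k) else 0)
            + (if r < (m : ℕ) ∧ (m : ℕ) ≤ (j : ℕ) then
                (uu ((m : ℕ) - r - 1) * t) * ((σ ^ ((m : ℕ) - (r + 1))) (Δ^[r + 1] (x k))) else 0)
        rcases eq_or_ne ((m : ℕ)) r with h1 | h1
        · rw [if_neg (show ¬((m : ℕ) = (j : ℕ) ∧ (j : ℕ) ≤ r) by omega),
            if_pos (show (m : ℕ) = r ∧ r < (j : ℕ) from ⟨h1, hj⟩),
            if_pos (show (m : ℕ) < r + 1 by omega), if_pos h1,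
            if_neg (show ¬(r < (m : ℕ) ∧ (m : ℕ) ≤ (j : ℕ)) by omega), one_mul, add_zero, h1]
        · by_cases h2 : r < (m : ℕ) ∧ (m : ℕ) ≤ (j : ℕ)
          · rw [if_neg (show ¬((m : ℕ) = (j : ℕ) ∧ (j : ℕ) ≤ r) by omega),
              if_neg (show ¬((m : ℕ) = r ∧ r < (j : ℕ)) by omega), if_pos h2,
              if_neg (show ¬((m : ℕ) < r + 1) by omega), if_neg h1, if_pos h2, zero_add]
          · rw [if_neg (show ¬((m : ℕ) = (j : ℕ) ∧ (j : ℕ) ≤ r) by omega),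
              if_neg (show ¬((m : ℕ) = r ∧ r < (j : ℕ)) by omega), if_neg h2, if_neg h1,
              if_neg h2, zero_mul, add_zero]
      rw [Finset.sum_congr rfl fun m _ => hterm m, Finset.sum_add_distrib,
        Fin.sum_univ_eq_sum_range (fun v : ℕ => if v = r then Δ^[r] (x k) else 0),
        Fin.sum_univ_eq_sum_range (fun v : ℕ => if r < v ∧ v ≤ (j : ℕ) then
          (uu (v - r - 1) * t) * ((σ ^ (v - (r + 1))) (Δ^[r + 1] (x k))) else 0)]
      have hs1 : ∑ v ∈ Finset.range (n + 1), (if v = r then Δ^[r] (x k) else 0)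
          = Δ^[r] (x k) := by
        rw [Finset.sum_ite_eq' (Finset.range (n + 1)) r (fun _ => Δ^[r] (x k))]
        rw [if_pos (Finset.mem_range.mpr (by omega))]
      have hs2 : ∑ v ∈ Finset.range (n + 1), (if r < v ∧ v ≤ (j : ℕ) then
            (uu (v - r - 1) * t) * ((σ ^ (v - (r + 1))) (Δ^[r + 1] (x k))) else 0)
          = ∑ i ∈ Finset.range ((j : ℕ) - r), uu i * t * (σ ^ i) (Δ^[r + 1] (x k)) := by
        have e1 : ∀ v ∈ Finset.range (n + 1), (if r < v ∧ v ≤ (j : ℕ) then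
              (uu (v - r - 1) * t) * ((σ ^ (v - (r + 1))) (Δ^[r + 1] (x k))) else 0)
            = (if v ∈ Finset.Ioc r (j : ℕ) then
                (uu (v - r - 1) * t) * ((σ ^ (v - (r + 1))) (Δ^[r + 1] (x k))) else 0) := by
          intro v _
          congr 1
          simp [Finset.mem_Ioc]
        rw [Finset.sum_congr rfl e1, Finset.sum_ite_mem,
          Finset.inter_eq_right.mpr (by
            intro v hv
            rw [Finset.mem_Ioc] at hv
            exact Finset.mem_range.mpr (by have := j.isLt; omega))]
        have e2 : Finset.Ioc r (j : ℕ) = Finset.Ico (r + 1) ((j : ℕ) + 1) := by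
          rw [Finset.Ico_add_one_right_eq_Icc, Finset.Icc_add_one_left_eq_Ioc]
        rw [e2, Finset.sum_Ico_eq_sum_range]
        have e3 : (j : ℕ) + 1 - (r + 1) = (j : ℕ) - r := by omega
        rw [e3]
        refine Finset.sum_congr rfl fun i _ => ?_
        have e4 : r + 1 + i - r - 1 = i := by omega
        have e5 : r + 1 + i - (r + 1) = i := by omega
        rw [e4, e5]
      rw [hs1, hs2]
  have hdet : ∀ (r : ℕ) (x : Fin (n + 1) → B), (Gm r x).det
      = (∏ j : Fin (n + 1), (if (j : ℕ) ≤ r then (1 : B) else uu ((j : ℕ) - r - 1) * t))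
        * (Gm (r + 1) x).det := by
    intro r x
    rw [hstep r x, Matrix.det_mul]
    congr 1
    rw [Matrix.det_of_lowerTriangular (Cm r) (by
      intro i j hij
      have h : (i : ℕ) < (j : ℕ) := OrderDual.toDual_lt_toDual.mp hij
      simp only [hCm, Matrix.of_apply]
      split_ifs <;> first | rfl | omega)]
    refine Finset.prod_congr rfl fun j _ => ?_
    simp only [hCm, Matrix.of_apply]
    rcases le_or_gt (j : ℕ) r with h | h
    · simp [h]
    · simp [h, show ¬((j : ℕ) ≤ r) by omega, show ¬((j : ℕ) = r) by omega]
  intro x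
  have hchain : ∀ R : ℕ, (Gm 0 x).det
      = (∏ r ∈ Finset.range R, ∏ j : Fin (n + 1),
          (if (j : ℕ) ≤ r then (1 : B) else uu ((j : ℕ) - r - 1) * t)) * (Gm R x).det := by
    intro R
    induction R with
    | zero => simp
    | succ R ih => rw [ih, hdet R x, Finset.prod_range_succ]; ring
  have h0 : Gm 0 x = Matrix.of fun j k : Fin (n + 1) => (σ ^ (j : ℕ)) (x k) := by
    ext j k
    simp [hGm]
  have h1 : Gm (n + 1) x = Matrix.of fun j k : Fin (n + 1) => Δ^[(j : ℕ)] (x k) := by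
    ext j k
    simp only [hGm, Matrix.of_apply]
    rw [if_pos j.isLt]
  rw [← h0, ← h1, hchain (n + 1)]

/-- If the augmentation ideal of a faithful `p`-cyclic action on a normal local
domain `B` is generated by `σ y − y` (with `σ y ≠ y`), then
`B = A·y⁰ ⊕ A·y¹ ⊕ … ⊕ A·y^{p−1}` over the invariant ring `A = B^G`:
every `b ∈ B` is uniquely `∑ aᵢ yⁱ` with `aᵢ ∈ A`. -/
theorem free_decomposition_of_augmentation_generator
    {B : Type*} [CommRing B] [IsDomain B] [IsIntegrallyClosed B] [IsLocalRing B]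
    (p : ℕ) (hp : p.Prime) (σ : B ≃+* B) (horder : orderOf σ = p)
    (hloc : ∀ b ∈ IsLocalRing.maximalIdeal B, σ b ∈ IsLocalRing.maximalIdeal B)
    (A : Subring B) (hA : A = RingHom.eqLocus (σ : B →+* B) (RingHom.id B))
    (y : B) (hy : σ y ≠ y)
    (hgen : Ideal.span {x | ∃ b : B, x = σ b - b} = Ideal.span {σ y - y}) :
    ∀ b : B, ∃! a : Fin p → A, b = ∑ i : Fin p, (a i : B) * y ^ (i : ℕ) := by
  classical
  obtain ⟨n, rfl⟩ : ∃ n, p = n + 1 := ⟨p - 1, (Nat.succ_pred_eq_of_pos hp.pos).symm⟩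
  have hAmem : ∀ z : B, z ∈ A ↔ σ z = z := by
    intro z
    rw [hA]
    exact Iff.rfl
  have hσ1 : σ ^ (n + 1) = (1 : B ≃+* B) := by rw [← horder]; exact pow_orderOf_eq_one σ
  set t := σ y - y with ht
  have ht0 : t ≠ 0 := sub_ne_zero.mpr hy
  have hdvd : ∀ z : B, t ∣ σ z - z := by
    intro z
    rw [← Ideal.mem_span_singleton, ← hgen]
    exact Ideal.subset_span ⟨z, rfl⟩
  obtain ⟨Δ, hΔ⟩ : ∃ Δ : B → B, ∀ z, σ z - z = t * Δ z := by
    choose Δ hΔ using fun z => (hdvd z)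
    exact ⟨Δ, hΔ⟩
  have hΔy : Δ y = 1 := by
    apply mul_left_cancel₀ ht0
    rw [mul_one, ← hΔ y, ← ht]
  obtain ⟨u₁, hu₁⟩ : ∃ u, σ t = t * u := by
    have h : σ t = σ (σ y) - σ y := by rw [ht, map_sub]
    rcases hdvd (σ y) with ⟨u, hu⟩
    exact ⟨u, by rw [h, hu]⟩
  obtain ⟨uu, huu0, huus⟩ : ∃ uu : ℕ → B, uu 0 = 1 ∧ ∀ i, uu (i + 1) = σ (uu i) * u₁ :=
    ⟨fun i => Nat.rec 1 (fun _ w => σ w * u₁) i, rfl, fun i => rfl⟩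
  have huut : ∀ i, (σ ^ i) t = uu i * t := by
    intro i
    induction i with
    | zero => rw [pow_zero, huu0, one_mul]; rfl
    | succ i ih =>
      have h : (σ ^ (i + 1)) t = σ ((σ ^ i) t) := by rw [pow_succ']; rfl
      rw [h, ih, map_mul, hu₁, huus]
      ring
  have hu₁unit : IsUnit u₁ := by
    have h : uu (n + 1) * t = t := by
      rw [← huut, hσ1]
      rfl
    have h2 : uu (n + 1) = 1 := by
      apply mul_right_cancel₀ ht0
      rw [h, one_mul]
    rw [huus] at h2
    exact IsUnit.of_mul_eq_one _ (by rw [mul_comm]; exact h2)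
  have huuunit : ∀ i, IsUnit (uu i) := by
    intro i
    induction i with
    | zero => rw [huu0]; exact isUnit_one
    | succ i ih => rw [huus]; exact (ih.map σ).mul hu₁unit
  -- each σ^s y - y is a unit times t
  have hwex : ∀ s : ℕ, 0 < s → s < n + 1 → ∃ w, IsUnit w ∧ (σ ^ s) y - y = w * t := by
    intro s hs0 hs1
    have hw' : (σ ^ s) y - y = (∑ i ∈ Finset.range s, uu i) * t := by
      rw [aux_tel σ y s, Finset.sum_mul]
      exact Finset.sum_congr rfl fun i _ => by rw [← ht, huut]
    refine ⟨∑ i ∈ Finset.range s, uu i, ?_, hw'⟩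
    set m := s ^ (Nat.totient (n + 1) - 1) with hm
    have hsm : σ ^ (s * m) = σ := by
      have hcop : Nat.Coprime s (n + 1) :=
        (hp.coprime_iff_not_dvd.mpr (fun hd => absurd (Nat.le_of_dvd hs0 hd) (by omega))).symm
      have h1 : s * m = s ^ Nat.totient (n + 1) := by
        have htot : 0 < Nat.totient (n + 1) := Nat.totient_pos.mpr (by omega)
        have h2 : Nat.totient (n + 1) = (Nat.totient (n + 1) - 1) + 1 := by omega
        rw [h2, pow_succ', hm]
      have h2 : s * m ≡ 1 [MOD n + 1] := by rw [h1]; exact Nat.ModEq.pow_totient hcop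
      calc σ ^ (s * m) = σ ^ 1 := by rw [pow_eq_pow_iff_modEq, horder]; exact h2
        _ = σ := pow_one σ
    have hterm : ∀ j : ℕ, ((σ ^ s) ^ j) ((∑ i ∈ Finset.range s, uu i) * t)
        = ((σ ^ (s * j)) (∑ i ∈ Finset.range s, uu i) * uu (s * j)) * t := by
      intro j
      rw [← pow_mul, map_mul, huut]
      ring
    have h1 : t = ∑ j ∈ Finset.range m,
        ((σ ^ (s * j)) (∑ i ∈ Finset.range s, uu i) * uu (s * j)) * t := by
      have h := aux_tel (σ ^ s) y m
      rw [← pow_mul, hsm, hw'] at h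
      conv_lhs => rw [ht]
      rw [h]
      exact Finset.sum_congr rfl fun j _ => hterm j
    have h3 : (1 : B) = ∑ j ∈ Finset.range m,
        (σ ^ (s * j)) (∑ i ∈ Finset.range s, uu i) * uu (s * j) := by
      apply mul_right_cancel₀ ht0
      rw [one_mul, Finset.sum_mul]
      exact h1
    have h4 : ∃ j ∈ Finset.range m,
        IsUnit ((σ ^ (s * j)) (∑ i ∈ Finset.range s, uu i) * uu (s * j)) := by
      by_contra hno
      push_neg at hno
      have hmem : (1 : B) ∈ IsLocalRing.maximalIdeal B := by
        rw [h3]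
        exact Ideal.sum_mem _ fun j hj => by
          rw [IsLocalRing.mem_maximalIdeal]
          exact hno j hj
      exact (IsLocalRing.maximalIdeal.isMaximal B).ne_top ((Ideal.eq_top_iff_one _).mpr hmem)
    obtain ⟨j, -, hj⟩ := h4
    have h5 : IsUnit ((σ ^ (s * j)) (∑ i ∈ Finset.range s, uu i)) := isUnit_of_mul_isUnit_left hj
    have h6 := h5.map ((σ ^ (s * j)).symm : B ≃+* B)
    rwa [RingEquiv.symm_apply_apply] at h6
  -- the power basis columns
  set Pw : Fin (n + 1) → B := fun k => y ^ (k : ℕ) with hPw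
  obtain ⟨c, hred, hc⟩ : ∃ c : B,
      (∀ x : Fin (n + 1) → B,
        (Matrix.of fun j k : Fin (n + 1) => (σ ^ (j : ℕ)) (x k)).det
          = c * (Matrix.of fun j k : Fin (n + 1) => Δ^[(j : ℕ)] (x k)).det)
      ∧ c = ∏ r ∈ Finset.range (n + 1), ∏ j : Fin (n + 1),
          (if (j : ℕ) ≤ r then (1 : B) else uu ((j : ℕ) - r - 1) * t) :=
    ⟨_, aux_red n σ t Δ hΔ uu huut, rfl⟩
  set N := ∑ i : Fin (n + 1), (Finset.Ioi i).card with hN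
  have hcform : ∃ e : B, IsUnit e ∧ c = e * t ^ N := by
    refine ⟨∏ r ∈ Finset.range (n + 1), ∏ j : Fin (n + 1),
      (if (j : ℕ) ≤ r then (1 : B) else uu ((j : ℕ) - r - 1)), ?_, ?_⟩
    · apply Finset.prod_induction _ IsUnit (fun a b => IsUnit.mul) isUnit_one
      intro r _
      apply Finset.prod_induction _ IsUnit (fun a b => IsUnit.mul) isUnit_one
      intro j _
      split_ifs
      exacts [isUnit_one, huuunit _]
    · rw [hc]
      have hinner : ∀ r : ℕ, (∏ j : Fin (n + 1),
            (if (j : ℕ) ≤ r then (1 : B) else uu ((j : ℕ) - r - 1) * t))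
          = (∏ j : Fin (n + 1), (if (j : ℕ) ≤ r then (1 : B) else uu ((j : ℕ) - r - 1)))
            * t ^ ((Finset.univ.filter (fun j : Fin (n + 1) => r < (j : ℕ))).card) := by
        intro r
        have h1 : ∀ j : Fin (n + 1),
            (if (j : ℕ) ≤ r then (1 : B) else uu ((j : ℕ) - r - 1) * t)
            = (if (j : ℕ) ≤ r then (1 : B) else uu ((j : ℕ) - r - 1))
              * (if r < (j : ℕ) then t else 1) := by
          intro j
          rcases le_or_gt (j : ℕ) r with h | h
          · rw [if_pos h, if_pos h, if_neg (by omega), mul_one]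
          · rw [if_neg (by omega), if_neg (by omega), if_pos h]
        rw [Finset.prod_congr rfl fun j _ => h1 j, Finset.prod_mul_distrib]
        congr 1
        rw [Finset.prod_ite, Finset.prod_const, Finset.prod_const, one_pow, mul_one]
      rw [Finset.prod_congr rfl fun r _ => hinner r, Finset.prod_mul_distrib,
        Finset.prod_pow_eq_pow_sum]
      congr 1
      congr 1
      rw [hN, ← Fin.sum_univ_eq_sum_range
        (fun r => (Finset.univ.filter (fun j : Fin (n + 1) => r < (j : ℕ))).card)]
      refine Finset.sum_congr rfl fun i _ => ?_
      congr 1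
      ext j
      simp only [Finset.mem_Ioi, Finset.mem_filter, Finset.mem_univ, true_and, Fin.lt_def]
  have hVform : ∃ v : B, IsUnit v ∧
      (Matrix.of fun j k : Fin (n + 1) => (σ ^ (j : ℕ)) (Pw k)).det = v * t ^ N := by
    have hMV : (Matrix.of fun j k : Fin (n + 1) => (σ ^ (j : ℕ)) (Pw k))
        = Matrix.vandermonde (fun j : Fin (n + 1) => (σ ^ (j : ℕ)) y) := by
      ext j k
      simp [Matrix.vandermonde, hPw, map_pow]
    have hfac : ∀ i j : Fin (n + 1), i < j →
        ∃ e : B, IsUnit e ∧ (σ ^ (j : ℕ)) y - (σ ^ (i : ℕ)) y = e * t := by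
      intro i j hij
      have hlt : (i : ℕ) < (j : ℕ) := hij
      obtain ⟨w, hwu, hw⟩ := hwex ((j : ℕ) - (i : ℕ)) (by omega) (by have := j.isLt; omega)
      refine ⟨(σ ^ (i : ℕ)) w * uu (i : ℕ), (hwu.map _).mul (huuunit _), ?_⟩
      have h1 : (σ ^ (j : ℕ)) y = (σ ^ (i : ℕ)) ((σ ^ ((j : ℕ) - (i : ℕ))) y) := by
        have hj' : (j : ℕ) = (i : ℕ) + ((j : ℕ) - (i : ℕ)) := by omega
        conv_lhs => rw [hj']
        rw [pow_add]
        rfl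
      rw [h1, ← map_sub, hw, map_mul, huut]
      ring
    set E : Fin (n + 1) → Fin (n + 1) → B :=
      fun i j => if h : i < j then (hfac i j h).choose else 1 with hE
    have hEspec : ∀ i j, i < j →
        IsUnit (E i j) ∧ (σ ^ (j : ℕ)) y - (σ ^ (i : ℕ)) y = E i j * t := by
      intro i j h
      rw [hE]
      simp only [dif_pos h]
      exact (hfac i j h).choose_spec
    refine ⟨∏ i : Fin (n + 1), ∏ j ∈ Finset.Ioi i, E i j, ?_, ?_⟩
    · apply Finset.prod_induction _ IsUnit (fun a b => IsUnit.mul) isUnit_one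
      intro i _
      apply Finset.prod_induction _ IsUnit (fun a b => IsUnit.mul) isUnit_one
      intro j hj
      exact (hEspec i j (Finset.mem_Ioi.mp hj)).1
    · rw [hMV, Matrix.det_vandermonde]
      have hin : ∀ i : Fin (n + 1), ∏ j ∈ Finset.Ioi i,
            ((σ ^ (j : ℕ)) y - (σ ^ (i : ℕ)) y)
          = (∏ j ∈ Finset.Ioi i, E i j) * t ^ (Finset.Ioi i).card := by
        intro i
        rw [Finset.prod_congr rfl fun j hj => (hEspec i j (Finset.mem_Ioi.mp hj)).2,
          Finset.prod_mul_distrib, Finset.prod_const]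
      rw [Finset.prod_congr rfl fun i _ => hin i, Finset.prod_mul_distrib,
        Finset.prod_pow_eq_pow_sum]
  obtain ⟨cE, hcEu, hcE⟩ := hcform
  obtain ⟨vE, hvEu, hvE⟩ := hVform
  have hdet : (Matrix.of fun j k : Fin (n + 1) => (σ ^ (j : ℕ)) (Pw k)).det
      = c * (Matrix.of fun j k : Fin (n + 1) => Δ^[(j : ℕ)] (Pw k)).det := hred Pw
  set d := (Matrix.of fun j k : Fin (n + 1) => Δ^[(j : ℕ)] (Pw k)).det with hd
  have hdunit : IsUnit d := by
    have h : cE * d * t ^ N = vE * t ^ N := by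
      calc cE * d * t ^ N = c * d := by rw [hcE]; ring
        _ = vE * t ^ N := by rw [← hdet, hvE]
    have h2 : cE * d = vE := mul_right_cancel₀ (pow_ne_zero _ ht0) h
    exact isUnit_of_mul_isUnit_right (h2 ▸ hvEu)
  have hdet0 : (Matrix.of fun j k : Fin (n + 1) => (σ ^ (j : ℕ)) (Pw k)).det ≠ 0 := by
    rw [hvE]
    exact mul_ne_zero hvEu.ne_zero (pow_ne_zero _ ht0)
  have hc0 : c ≠ 0 := by
    rw [hcE]
    exact mul_ne_zero hcEu.ne_zero (pow_ne_zero _ ht0)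
  have hfixA : ∀ z : B, σ z = z → ∀ i : ℕ, (σ ^ i) z = z := by
    intro z hz i
    induction i with
    | zero => rfl
    | succ i ih =>
      have h : (σ ^ (i + 1)) z = σ ((σ ^ i) z) := by rw [pow_succ']; rfl
      rw [h, ih, hz]
  -- kernel lemma for uniqueness
  have hker : ∀ g : Fin (n + 1) → B, (∀ k, σ (g k) = g k) →
      (∑ k : Fin (n + 1), g k * y ^ (k : ℕ)) = 0 → ∀ k, g k = 0 := by
    intro g hg hsum k
    have hvec : Matrix.mulVec (Matrix.of fun j k : Fin (n + 1) => (σ ^ (j : ℕ)) (Pw k)) g = 0 := by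
      funext j
      show ∑ k' : Fin (n + 1), (σ ^ (j : ℕ)) (Pw k') * g k' = 0
      have h1 : ∑ k' : Fin (n + 1), (σ ^ (j : ℕ)) (Pw k') * g k'
          = (σ ^ (j : ℕ)) (∑ k' : Fin (n + 1), g k' * y ^ (k' : ℕ)) := by
        rw [map_sum]
        refine Finset.sum_congr rfl fun k' _ => ?_
        rw [map_mul, hfixA _ (hg k')]
        exact mul_comm _ _
      rw [h1, hsum, map_zero]
    have h1 := congrArg (fun v =>
      Matrix.mulVec (Matrix.of fun j k : Fin (n + 1) => (σ ^ (j : ℕ)) (Pw k)).adjugate v) hvec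
    simp only [Matrix.mulVec_mulVec, Matrix.mulVec_zero] at h1
    rw [Matrix.adjugate_mul, Matrix.smul_mulVec, Matrix.one_mulVec] at h1
    have h2 := congrFun h1 k
    simp only [Pi.smul_apply, smul_eq_mul, Pi.zero_apply] at h2
    exact (mul_eq_zero.mp h2).resolve_left hdet0
  -- existence
  intro b
  set β : Fin (n + 1) → B := fun j => (σ ^ (j : ℕ)) b with hβ
  have hcr := Matrix.mulVec_cramer (Matrix.of fun j k : Fin (n + 1) => (σ ^ (j : ℕ)) (Pw k)) β
  have hupd : ∀ k₀ : Fin (n + 1),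
      (Matrix.of fun j k : Fin (n + 1) => (σ ^ (j : ℕ)) (Pw k)).updateCol k₀ β
        = Matrix.of fun j k : Fin (n + 1) => (σ ^ (j : ℕ)) (Function.update Pw k₀ b k) := by
    intro k₀
    ext j k
    by_cases hk : k = k₀
    · subst hk
      simp [Matrix.updateCol_apply, hβ]
    · simp [Matrix.updateCol_apply, hk]
  set Dk : Fin (n + 1) → B := fun k₀ =>
    (Matrix.of fun j k : Fin (n + 1) => Δ^[(j : ℕ)] (Function.update Pw k₀ b k)).det with hDk
  have hcrk : ∀ k₀, Matrix.cramer
      (Matrix.of fun j k : Fin (n + 1) => (σ ^ (j : ℕ)) (Pw k)) β k₀ = c * Dk k₀ := by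
    intro k₀
    rw [Matrix.cramer_apply, hupd k₀, hred]
  have hrow : ∑ k : Fin (n + 1), Pw k * (c * Dk k)
      = (c * d) * b := by
    have h := congrFun hcr 0
    simp only [Matrix.mulVec, dotProduct, Pi.smul_apply, smul_eq_mul] at h
    calc ∑ k : Fin (n + 1), Pw k * (c * Dk k)
        = ∑ k : Fin (n + 1), (Matrix.of fun j k : Fin (n + 1) => (σ ^ (j : ℕ)) (Pw k)) 0 k
            * Matrix.cramer (Matrix.of fun j k : Fin (n + 1) => (σ ^ (j : ℕ)) (Pw k)) β k := by
          refine Finset.sum_congr rfl fun k _ => ?_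
          rw [hcrk k]
          congr 1
      _ = (Matrix.of fun j k : Fin (n + 1) => (σ ^ (j : ℕ)) (Pw k)).det * β 0 := h
      _ = (c * d) * b := by
          rw [hdet]
          have hβ0 : β 0 = b := by
            show (σ ^ ((0 : Fin (n + 1)) : ℕ)) b = b
            rw [Fin.val_zero, pow_zero]
            rfl
          rw [hβ0]
  have hsum2 : ∑ k : Fin (n + 1), Pw k * Dk k = d * b := by
    apply mul_left_cancel₀ hc0
    rw [Finset.mul_sum]
    calc ∑ k : Fin (n + 1), c * (Pw k * Dk k)
        = ∑ k : Fin (n + 1), Pw k * (c * Dk k) := Finset.sum_congr rfl fun k _ => by ring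
      _ = (c * d) * b := hrow
      _ = c * (d * b) := by ring
  obtain ⟨du, hdu⟩ := hdunit
  set a0 : Fin (n + 1) → B := fun k => Dk k * ((du⁻¹ : Bˣ) : B) with ha0
  have ha0sum : ∑ k : Fin (n + 1), a0 k * y ^ (k : ℕ) = b := by
    have h1 : ∑ k : Fin (n + 1), a0 k * y ^ (k : ℕ)
        = ((du⁻¹ : Bˣ) : B) * ∑ k : Fin (n + 1), Pw k * Dk k := by
      rw [Finset.mul_sum]
      refine Finset.sum_congr rfl fun k _ => ?_
      show Dk k * ((du⁻¹ : Bˣ) : B) * y ^ (k : ℕ)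
        = ((du⁻¹ : Bˣ) : B) * (y ^ (k : ℕ) * Dk k)
      ring
    rw [h1, hsum2, ← hdu, ← mul_assoc, Units.inv_mul, one_mul]
  have ha0rel : ∀ k : Fin (n + 1),
      a0 k * (Matrix.of fun j k' : Fin (n + 1) => (σ ^ (j : ℕ)) (Pw k')).det
        = (Matrix.of fun j k' : Fin (n + 1) =>
            (σ ^ (j : ℕ)) (Function.update Pw k b k')).det := by
    intro k
    have hDkk : (Matrix.of fun j k' : Fin (n + 1) =>
        Δ^[(j : ℕ)] (Function.update Pw k b k')).det = Dk k := rfl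
    have ha0k : a0 k = Dk k * ((du⁻¹ : Bˣ) : B) := rfl
    rw [hdet, hred (Function.update Pw k b), hDkk, ha0k]
    have hud : ((du⁻¹ : Bˣ) : B) * d = 1 := by rw [← hdu]; exact Units.inv_mul du
    calc Dk k * ((du⁻¹ : Bˣ) : B) * (c * d)
        = (c * Dk k) * (((du⁻¹ : Bˣ) : B) * d) := by ring
      _ = c * Dk k := by rw [hud, mul_one]
  have ha0fix : ∀ k, σ (a0 k) = a0 k := by
    intro k
    have h1 := aux_conj n σ horder Pw
    have h2 := aux_conj n σ horder (Function.update Pw k b)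
    have h3 := congrArg σ (ha0rel k)
    rw [map_mul, h1, h2, ← ha0rel k] at h3
    have hne : ((-1 : B) ^ n * (Matrix.of fun j k' : Fin (n + 1) =>
        (σ ^ (j : ℕ)) (Pw k')).det) ≠ 0 :=
      mul_ne_zero (pow_ne_zero _ (neg_ne_zero.mpr one_ne_zero)) hdet0
    apply mul_right_cancel₀ hne
    rw [h3]
    ring
  refine ⟨fun k => ⟨a0 k, (hAmem _).mpr (ha0fix k)⟩, ?_, ?_⟩
  · exact ha0sum.symm
  · intro a' ha'
    funext k
    apply Subtype.ext
    have hg : ∀ k' : Fin (n + 1), σ (((a' k' : B)) - a0 k') = (a' k' : B) - a0 k' := by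
      intro k'
      rw [map_sub, ha0fix k', (hAmem _).mp (a' k').2]
    have h0 : ∑ k' : Fin (n + 1), ((a' k' : B) - a0 k') * y ^ (k' : ℕ) = 0 := by
      simp only [sub_mul]
      rw [Finset.sum_sub_distrib, ← ha', ha0sum, sub_self]
    have hk := hker _ hg h0 k
    have : (a' k : B) = a0 k := sub_eq_zero.mp hk
    simpa using this
end

section
/- Let B be a normal local domain with a faithful action of a cyclic group G of prime order p by local automorphisms, A = B^G. If the augmentation ideal I_G is principal with augmentation generator y, and a ∈ A divides b = a₀ + a₁y + … + a_{p−1}y^{p−1} in B with all a_i ∈ A, then a divides each a_i in A. -/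
open Polynomial Finset

private lemma RA.mul_apply {B : Type*} [CommRing B] (f g : B ≃+* B) (x : B) :
    (f * g) x = f (g x) := rfl

private lemma RA.one_apply {B : Type*} [CommRing B] (x : B) : (1 : B ≃+* B) x = x := rfl

private lemma RA.pow_add_apply {B : Type*} [CommRing B] (σ : B ≃+* B) (m n : ℕ) (x : B) :
    (σ ^ (m + n)) x = (σ ^ m) ((σ ^ n) x) := by
  rw [pow_add, RA.mul_apply]

private lemma RA.pow_succ_apply {B : Type*} [CommRing B] (σ : B ≃+* B) (k : ℕ) (x : B) :
    (σ ^ (k + 1)) x = (σ ^ k) (σ x) := by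
  rw [pow_succ, RA.mul_apply]

private lemma RA.pow_succ_apply' {B : Type*} [CommRing B] (σ : B ≃+* B) (k : ℕ) (x : B) :
    (σ ^ (k + 1)) x = σ ((σ ^ k) x) := by
  rw [pow_succ', RA.mul_apply]

private lemma RA.fix_pow {B : Type*} [CommRing B] (σ : B ≃+* B) (x : B) (h : σ x = x) :
    ∀ k : ℕ, (σ ^ k) x = x := by
  intro k
  induction k with
  | zero => simp [RA.one_apply]
  | succ k ih => rw [RA.pow_succ_apply', ih, h]

private lemma newton_step {R : Type*} [CommRing R] (m : ℕ) (W W' G : ℕ → R)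
    (hW : ∀ j, j < m + 1 → W' j = W j + (G (j + 1) - G 0) * W (j + 1)) :
    ∑ j ∈ range (m + 1), W' j * ∏ l ∈ range j, (G (m + 1) - G (l + 1))
      = ∑ j ∈ range (m + 2), W j * ∏ l ∈ range j, (G (m + 1) - G l) := by
  have F4 : ∏ l ∈ range (m + 1), (G (m + 1) - G (l + 1)) = 0 :=
    prod_eq_zero (self_mem_range_succ m) (sub_self _)
  have hsplit : ∑ j ∈ range (m + 1), W' j * ∏ l ∈ range j, (G (m + 1) - G (l + 1))
      = (∑ j ∈ range (m + 1), W j * ∏ l ∈ range j, (G (m + 1) - G (l + 1)))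
        + ∑ j ∈ range (m + 1), ((G (m + 1) - G 0) * (W (j + 1) * ∏ l ∈ range j, (G (m + 1) - G (l + 1)))
            - W (j + 1) * ∏ l ∈ range (j + 1), (G (m + 1) - G (l + 1))) := by
    rw [← sum_add_distrib]
    refine sum_congr rfl fun j hj => ?_
    rw [hW j (mem_range.mp hj), prod_range_succ]
    ring
  have h2 : ∑ j ∈ range (m + 1), W (j + 1) * ∏ l ∈ range (j + 1), (G (m + 1) - G (l + 1))
      = (∑ j ∈ range (m + 1), W j * ∏ l ∈ range j, (G (m + 1) - G (l + 1))) - W 0 := by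
    have := sum_range_succ' (fun j => W j * ∏ l ∈ range j, (G (m + 1) - G (l + 1))) (m + 1)
    rw [sum_range_succ (fun j => W j * ∏ l ∈ range j, (G (m + 1) - G (l + 1))) (m + 1), F4] at this
    simp only [prod_range_zero, mul_one, mul_zero, add_zero] at this
    linear_combination -this
  have h3 : ∑ j ∈ range (m + 2), W j * ∏ l ∈ range j, (G (m + 1) - G l)
      = (∑ j ∈ range (m + 1), (G (m + 1) - G 0) * (W (j + 1) * ∏ l ∈ range j, (G (m + 1) - G (l + 1)))) + W 0 := by
    rw [sum_range_succ' (fun j => W j * ∏ l ∈ range j, (G (m + 1) - G l)) (m + 1)]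
    simp only [prod_range_zero, mul_one]
    congr 1
    refine sum_congr rfl fun j hj => ?_
    rw [prod_range_succ' (fun l => G (m + 1) - G l) j]
    ring
  rw [hsplit, sum_sub_distrib, h2, h3]
  ring

/-- If `y` is an augmentation generator for a faithful `p`-cyclic action on a
normal local domain `B` and `a ∈ A = B^G` divides `a₀ + a₁y + … + a_{p−1}y^{p−1}`
in `B` with all `aᵢ ∈ A`, then `a` divides each `aᵢ` in `A`. -/
theorem dvd_coefficients_of_dvd_combination
    {B : Type*} [CommRing B] [IsDomain B] [IsIntegrallyClosed B] [IsLocalRing B]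
    (p : ℕ) (hp : p.Prime) (σ : B ≃+* B) (horder : orderOf σ = p)
    (hloc : ∀ b ∈ IsLocalRing.maximalIdeal B, σ b ∈ IsLocalRing.maximalIdeal B)
    (A : Subring B) (hA : A = RingHom.eqLocus (σ : B →+* B) (RingHom.id B))
    (y : B) (hy : σ y ≠ y)
    (hgen : Ideal.span {x | ∃ b : B, x = σ b - b} = Ideal.span {σ y - y})
    (a : A) (c : Fin p → A)
    (hdvd : (a : B) ∣ ∑ i : Fin p, (c i : B) * y ^ (i : ℕ)) :
    ∀ i : Fin p, a ∣ c i := by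
  classical
  set t := σ y - y with ht_def
  have ht : t ≠ 0 := sub_ne_zero.mpr hy
  have hp1 : 1 < p := hp.one_lt
  -- σ-fixedness of elements of A
  have hfixA : ∀ x : B, x ∈ A → σ x = x := by
    intro x hx
    rw [hA] at hx
    exact hx
  have hfixApow : ∀ (k : ℕ) (x : A), (σ ^ k) (x : B) = (x : B) :=
    fun k x => RA.fix_pow σ _ (hfixA _ x.2) k
  -- basic membership in the augmentation ideal
  have hmem : ∀ u : B, ∃ v : B, σ u - u = t * v := by
    intro u
    have h1 : σ u - u ∈ Ideal.span {t} := by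
      rw [← hgen]; exact Ideal.subset_span ⟨u, rfl⟩
    rw [Ideal.mem_span_singleton'] at h1
    obtain ⟨v, hv⟩ := h1
    exact ⟨v, by rw [← hv, mul_comm]⟩
  have htel : ∀ k : ℕ, ∃ v : B, (σ ^ k) y - y = t * v := by
    intro k
    induction k with
    | zero => exact ⟨0, by simp [RA.one_apply]⟩
    | succ k ih =>
      obtain ⟨v, hv⟩ := ih
      obtain ⟨v', hv'⟩ := hmem ((σ ^ k) y)
      refine ⟨v' + v, ?_⟩
      rw [RA.pow_succ_apply']
      have : σ ((σ ^ k) y) - y = (σ ((σ ^ k) y) - (σ ^ k) y) + ((σ ^ k) y - y) := by ring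
      rw [this, hv, hv', mul_add]
  have hσt : ∀ k : ℕ, ∃ u : B, (σ ^ k) t = t * u := by
    intro k
    obtain ⟨u, hu⟩ := hmem ((σ ^ k) y)
    refine ⟨u, ?_⟩
    rw [ht_def, map_sub, ← RA.pow_succ_apply, RA.pow_succ_apply', hu, ht_def]
  choose u hu using hσt
  have htelm : ∀ (m r : ℕ), (σ ^ (m * r)) y - y = ∑ j ∈ range r, (σ ^ (m * j)) ((σ ^ m) y - y) := by
    intro m r
    induction r with
    | zero => simp [RA.one_apply]
    | succ r ih =>
      rw [sum_range_succ, ← ih, Nat.mul_succ, RA.pow_add_apply, map_sub]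
      ring
  -- the key unit lemma (uses locality)
  have hUnit : ∀ m : ℕ, 0 < m → m < p → ∃ v : B, IsUnit v ∧ (σ ^ m) y - y = t * v := by
    intro m hm hmp
    obtain ⟨v, hv⟩ := htel m
    refine ⟨v, ?_, hv⟩
    haveI : Fact p.Prime := ⟨hp⟩
    have hpm : ¬ p ∣ m := fun hd => absurd (Nat.le_of_dvd hm hd) (not_le.mpr hmp)
    have hm0 : (m : ZMod p) ≠ 0 := fun h => hpm ((ZMod.natCast_eq_zero_iff m p).mp h)
    set r : ℕ := ((m : ZMod p)⁻¹).val with hr_def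
    have hmr : σ ^ (m * r) = σ := by
      have h5 : σ ^ (m * r) = σ ^ 1 := by
        rw [pow_eq_pow_iff_modEq, horder, ← ZMod.natCast_eq_natCast_iff]
        push_cast
        rw [hr_def, ZMod.natCast_val, ZMod.cast_id, mul_inv_cancel₀ hm0]
      simpa using h5
    have key : t = t * ∑ j ∈ range r, u (m * j) * (σ ^ (m * j)) v := by
      calc t = (σ ^ (m * r)) y - y := by rw [hmr]
      _ = ∑ j ∈ range r, (σ ^ (m * j)) ((σ ^ m) y - y) := htelm m r
      _ = ∑ j ∈ range r, (t * u (m * j)) * (σ ^ (m * j)) v := by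
          refine Finset.sum_congr rfl fun j _ => ?_
          rw [hv, map_mul, hu]
      _ = t * ∑ j ∈ range r, u (m * j) * (σ ^ (m * j)) v := by
          rw [mul_sum]; exact Finset.sum_congr rfl fun j _ => by ring
    have hsum1 : ∑ j ∈ range r, u (m * j) * (σ ^ (m * j)) v = 1 := by
      have h6 := key
      nth_rewrite 1 [← mul_one t] at h6
      exact (mul_left_cancel₀ ht h6.symm)
    have hexists : ∃ j ∈ range r, IsUnit (u (m * j) * (σ ^ (m * j)) v) := by
      by_contra hcon
      push_neg at hcon
      have h1 : (1 : B) ∈ IsLocalRing.maximalIdeal B := by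
        rw [← hsum1]
        exact Ideal.sum_mem _ fun j hj => (hcon j hj)
      exact (IsLocalRing.maximalIdeal.isMaximal B).ne_top
        (Ideal.eq_top_of_isUnit_mem _ h1 isUnit_one)
    obtain ⟨j, _, hju⟩ := hexists
    have h2 : IsUnit ((σ ^ (m * j)) v) := isUnit_of_mul_isUnit_right hju
    have h3 := h2.map ((σ ^ (m * j)).symm : B →+* B)
    have h4 := (σ ^ (m * j)).symm_apply_apply v
    rw [← h4]; exact h3
  -- distinctness of the conjugates of y
  have hdist : ∀ k l : ℕ, k < l → l < p → (σ ^ k) y ≠ (σ ^ l) y := by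
    intro k l hkl hlp heq
    obtain ⟨v, hvu, hv⟩ := hUnit (l - k) (by omega) (by omega)
    have h1 : (σ ^ l) y = (σ ^ k) ((σ ^ (l - k)) y) := by
      rw [← RA.pow_add_apply]
      congr 2
      omega
    have h2 : (σ ^ (l - k)) y = y := by
      apply (σ ^ k).injective
      rw [← h1, ← heq]
    rw [h2, sub_self] at hv
    exact (mul_ne_zero ht hvu.ne_zero) hv.symm
  have hinj : Function.Injective (fun k : Fin p => (σ ^ (k : ℕ)) y) := by
    intro k k' hkk
    by_contra hne
    have hne' : (k : ℕ) ≠ (k' : ℕ) := fun h => hne (Fin.ext h)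
    rcases Nat.lt_or_ge (k : ℕ) (k' : ℕ) with h | h
    · exact hdist _ _ h k'.2 hkk
    · exact hdist _ _ (by omega) k.2 hkk.symm
  -- the polynomial with the c coefficients
  set CB : Polynomial B := ∑ i : Fin p, C ((c i : B)) * X ^ (i : ℕ) with hCB_def
  have hCBdeg : CB.natDegree < p := by
    have : CB.natDegree ≤ p - 1 := by
      apply natDegree_sum_le_of_forall_le
      intro i _
      exact (natDegree_C_mul_le _ _).trans ((natDegree_X_pow _).le.trans (by omega))
    omega
  have hCBcoeff : ∀ i : Fin p, CB.coeff (i : ℕ) = (c i : B) := by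
    intro i
    rw [hCB_def, finset_sum_coeff]
    rw [Finset.sum_eq_single i]
    · simp [coeff_X_pow]
    · intro i' _ hii
      have hne : ¬ ((i : ℕ) = (i' : ℕ)) := fun h => hii (Fin.ext h.symm)
      rw [coeff_C_mul, coeff_X_pow, if_neg hne, mul_zero]
    · simp
  have hCBeval : ∀ k : ℕ, CB.eval ((σ ^ k) y) = (σ ^ k) (∑ i : Fin p, (c i : B) * y ^ (i : ℕ)) := by
    intro k
    rw [hCB_def, eval_finset_sum, map_sum]
    refine Finset.sum_congr rfl fun i _ => ?_
    rw [eval_mul, eval_C, eval_pow, eval_X, map_mul, map_pow, hfixApow]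
  intro i
  by_cases ha : (a : B) = 0
  · -- degenerate case : a = 0
    rw [ha, zero_dvd_iff] at hdvd
    have hz : CB = 0 := by
      apply eq_zero_of_natDegree_lt_card_of_eval_eq_zero CB hinj
      · intro k
        rw [hCBeval, hdvd, map_zero]
      · simpa using hCBdeg
    have : (c i : B) = 0 := by rw [← hCBcoeff i, hz, coeff_zero]
    have hc0 : c i = 0 := Subtype.ext this
    rw [hc0]
    exact dvd_zero a
  · obtain ⟨z₀, hz₀⟩ := hdvd
    -- construct the sequence of divided differences
    have hstep : ∀ (j : ℕ), j + 1 < p → ∀ v : B, ∃ v' : B, ((σ ^ (j + 1)) y - y) * v' = σ v - v := by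
      intro j hj v
      obtain ⟨cv, hcv⟩ := hmem v
      obtain ⟨ε, hεu, hε⟩ := hUnit (j + 1) (Nat.succ_pos j) hj
      obtain ⟨εi, hεi⟩ := hεu.exists_right_inv
      refine ⟨εi * cv, ?_⟩
      rw [hε, hcv]
      calc t * ε * (εi * cv) = t * (ε * εi) * cv := by ring
      _ = t * cv := by rw [hεi, mul_one]
    let w : ℕ → B := fun n => Nat.rec z₀
      (fun j prev => if h : j + 1 < p then Classical.choose (hstep j h prev) else 0) n
    have hw0 : w 0 = z₀ := rfl
    have hwrec : ∀ j : ℕ, j + 1 < p → ((σ ^ (j + 1)) y - y) * w (j + 1) = σ (w j) - w j := by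
      intro j hj
      have hw1 : w (j + 1) = if h : j + 1 < p then Classical.choose (hstep j h (w j)) else 0 := rfl
      rw [hw1, dif_pos hj]
      exact Classical.choose_spec (hstep j hj (w j))
    -- Newton's interpolation identity
    have Qlem : ∀ m : ℕ, m < p → ∀ k : ℕ, (σ ^ (k + m)) z₀
        = ∑ j ∈ range (m + 1), (σ ^ k) (w j) * ∏ l ∈ range j, ((σ ^ (k + m)) y - (σ ^ (k + l)) y) := by
      intro m
      induction m with
      | zero => intro _ k; simp [hw0]
      | succ m IH =>
        intro hm1 k
        have IH' := IH (by omega) (k + 1)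
        -- normalize the exponents in IH'
        have e1 : ∀ l : ℕ, k + 1 + l = k + (l + 1) := fun l => by omega
        simp only [e1] at IH'
        have h0 : ∀ j, j < m + 1 → (σ ^ (k + 1)) (w j)
            = (σ ^ k) (w j) + ((σ ^ (k + (j + 1))) y - (σ ^ (k + 0)) y) * (σ ^ k) (w (j + 1)) := by
          intro j hj
          have hrec' : σ (w j) = w j + ((σ ^ (j + 1)) y - y) * w (j + 1) := by
            linear_combination -hwrec j (by omega)
          calc (σ ^ (k + 1)) (w j) = (σ ^ k) (σ (w j)) := RA.pow_succ_apply σ k (w j)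
          _ = (σ ^ k) (w j + ((σ ^ (j + 1)) y - y) * w (j + 1)) := by rw [hrec']
          _ = (σ ^ k) (w j) + ((σ ^ k) ((σ ^ (j + 1)) y) - (σ ^ k) y) * (σ ^ k) (w (j + 1)) := by
              rw [map_add, map_mul, map_sub]
          _ = (σ ^ k) (w j) + ((σ ^ (k + (j + 1))) y - (σ ^ (k + 0)) y) * (σ ^ k) (w (j + 1)) := by
              rw [← RA.pow_add_apply]
              norm_num
        have hns := newton_step m (fun j => (σ ^ k) (w j)) (fun j => (σ ^ (k + 1)) (w j))
          (fun l => (σ ^ (k + l)) y) h0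
        rw [IH']
        exact hns
    -- the Newton interpolation polynomial
    set PN : Polynomial B := ∑ j ∈ range p, C (w j) * ∏ l ∈ range j, (X - C ((σ ^ l) y)) with hPN_def
    have hPNeval : ∀ k : Fin p, (C (a : B) * PN).eval ((σ ^ (k : ℕ)) y)
        = (σ ^ (k : ℕ)) (∑ i : Fin p, (c i : B) * y ^ (i : ℕ)) := by
      intro k
      have hQ := Qlem (k : ℕ) k.2 0
      simp only [Nat.zero_add, pow_zero, RA.one_apply] at hQ
      have hterm : ∀ j : ℕ, (C (w j) * ∏ l ∈ range j, (X - C ((σ ^ l) y))).eval ((σ ^ (k : ℕ)) y)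
          = w j * ∏ l ∈ range j, ((σ ^ (k : ℕ)) y - (σ ^ l) y) := by
        intro j
        rw [eval_mul, eval_C, eval_prod]
        congr 1
        exact prod_congr rfl fun l _ => by rw [eval_sub, eval_X, eval_C]
      have hvan : ∀ j ∈ range p, j ∉ range ((k : ℕ) + 1) →
          w j * ∏ l ∈ range j, ((σ ^ (k : ℕ)) y - (σ ^ l) y) = 0 := by
        intro j _ hj
        rw [mem_range, not_lt] at hj
        have hzero : ∏ l ∈ range j, ((σ ^ (k : ℕ)) y - (σ ^ l) y) = 0 :=
          prod_eq_zero (mem_range.mpr (by omega : (k : ℕ) < j)) (sub_self _)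
        rw [hzero, mul_zero]
      calc (C (a : B) * PN).eval ((σ ^ (k : ℕ)) y)
          = (a : B) * ∑ j ∈ range p, (C (w j) * ∏ l ∈ range j, (X - C ((σ ^ l) y))).eval ((σ ^ (k : ℕ)) y) := by
            rw [eval_mul, eval_C, hPN_def, eval_finset_sum]
      _ = (a : B) * ∑ j ∈ range p, w j * ∏ l ∈ range j, ((σ ^ (k : ℕ)) y - (σ ^ l) y) := by
            rw [sum_congr rfl fun j _ => hterm j]
      _ = (a : B) * ∑ j ∈ range ((k : ℕ) + 1), w j * ∏ l ∈ range j, ((σ ^ (k : ℕ)) y - (σ ^ l) y) := by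
            rw [Finset.sum_subset (Finset.range_subset_range.mpr k.2) hvan]
      _ = (a : B) * (σ ^ (k : ℕ)) z₀ := by rw [← hQ]
      _ = (σ ^ (k : ℕ)) (∑ i : Fin p, (c i : B) * y ^ (i : ℕ)) := by
            rw [hz₀, map_mul, hfixApow]
    -- the two polynomials agree
    have hfinal : CB = C (a : B) * PN := by
      have hsub : CB - C (a : B) * PN = 0 := by
        apply eq_zero_of_natDegree_lt_card_of_eval_eq_zero _ hinj
        · intro k
          rw [eval_sub, hCBeval (k : ℕ), hPNeval k, sub_self]
        · have hd2 : (C (a : B) * PN).natDegree ≤ p - 1 := by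
            refine (natDegree_C_mul_le _ _).trans ?_
            rw [hPN_def]
            apply natDegree_sum_le_of_forall_le
            intro j hj
            refine (natDegree_C_mul_le _ _).trans ?_
            refine (natDegree_prod_le _ _).trans ?_
            calc ∑ l ∈ range j, (X - C ((σ ^ l) y)).natDegree
                = ∑ l ∈ range j, 1 := sum_congr rfl fun l _ => natDegree_X_sub_C _
            _ = j := by simp
            _ ≤ p - 1 := by have := mem_range.mp hj; omega
          have hd3 := natDegree_sub_le CB (C (a : B) * PN)
          simp only [Fintype.card_fin]
          omega
      exact sub_eq_zero.mp hsub
    have hci : (c i : B) = (a : B) * PN.coeff (i : ℕ) := by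
      rw [← hCBcoeff i, hfinal, coeff_C_mul]
    have hσd : σ (PN.coeff (i : ℕ)) = PN.coeff (i : ℕ) := by
      have h7 : (a : B) * σ (PN.coeff (i : ℕ)) = (a : B) * PN.coeff (i : ℕ) := by
        have h8 := congrArg σ hci
        rw [map_mul, hfixA _ a.2, hfixA _ (c i).2] at h8
        rw [← h8, hci]
      exact mul_left_cancel₀ ha h7
    have hdA : PN.coeff (i : ℕ) ∈ A := by rw [hA]; exact hσd
    exact ⟨⟨PN.coeff (i : ℕ), hdA⟩, Subtype.ext hci⟩
end

section
/- Let B be a regular local ring, G a cyclic group of prime order p acting on B by local automorphisms with invariant ring A = B^G, such that the map on residue fields k_A → k_B is an isomorphism. If (y₁, …, y_d) generates m_B, then I_G = B·I(y₁) + … + B·I(y_d), where I(b) = σ(b) − b for a generator σ of G. -/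
/-- A noetherian local ring is regular if its maximal ideal is generated by
`dim R` elements. -/
def IsRegularLocal (R : Type*) [CommRing R] [IsLocalRing R] : Prop :=
  IsNoetherianRing R ∧ ∃ s : Finset R,
    Ideal.span (s : Set R) = IsLocalRing.maximalIdeal R ∧
    (s.card : WithBot (WithTop ℕ)) = ringKrullDim R

/-- For a `p`-cyclic action by local automorphisms on a regular local ring `B`
with `k_A ≅ k_B`, if `(y₁, …, y_d)` generates `m_B` then
`I_G = B·I(y₁) + … + B·I(y_d)` where `I b = σ b − b`. -/
theorem augmentation_ideal_eq_span_of_parameters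
    {B : Type*} [CommRing B] [IsLocalRing B] (hreg : IsRegularLocal B)
    (p : ℕ) (hp : p.Prime) (σ : B ≃+* B) (horder : orderOf σ = p)
    (hloc : ∀ b ∈ IsLocalRing.maximalIdeal B, σ b ∈ IsLocalRing.maximalIdeal B)
    (A : Subring B) (hA : A = RingHom.eqLocus (σ : B →+* B) (RingHom.id B))
    (hres : ∀ b : B, ∃ a ∈ A, b - a ∈ IsLocalRing.maximalIdeal B)
    (d : ℕ) (y : Fin d → B)
    (hy : Ideal.span (Set.range y) = IsLocalRing.maximalIdeal B) :
    Ideal.span {x | ∃ (k : ℕ) (b : B), x = (σ ^ k) b - b} =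
      Ideal.span (Set.range fun i => σ (y i) - y i) := by
  classical
  haveI : IsNoetherianRing B := hreg.1
  set J : Ideal B := Ideal.span (Set.range fun i => σ (y i) - y i) with hJ
  set I1 : Ideal B := Ideal.span {x | ∃ b : B, x = σ b - b} with hI1
  -- J ≤ I1
  have hJI1 : J ≤ I1 := by
    rw [hJ, Ideal.span_le]
    rintro _ ⟨i, rfl⟩
    exact Ideal.subset_span ⟨y i, rfl⟩
  -- each σ b - b ∈ I1
  have hmemI1 : ∀ b : B, σ b - b ∈ I1 := fun b => Ideal.subset_span ⟨b, rfl⟩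
  -- the full augmentation ideal equals I1
  have hII1 : Ideal.span {x | ∃ (k : ℕ) (b : B), x = (σ ^ k) b - b} = I1 := by
    apply le_antisymm
    · rw [Ideal.span_le]
      rintro _ ⟨k, b, rfl⟩
      induction k generalizing b with
      | zero =>
        have h0 : (σ ^ 0) b - b = 0 := by rw [pow_zero]; exact sub_self b
        rw [h0]; exact Submodule.zero_mem I1

      | succ n ih =>
        have hmul : (σ ^ (n + 1)) b = (σ ^ n) (σ b) := by
          rw [pow_succ]; rfl
        have : (σ ^ (n + 1)) b - b = ((σ ^ n) (σ b) - σ b) + (σ b - b) := by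
          rw [hmul]; ring
        rw [this]
        exact Submodule.add_mem _ (ih (σ b)) (hmemI1 b)
    · rw [hI1, Ideal.span_le]
      rintro _ ⟨b, rfl⟩
      exact Ideal.subset_span ⟨1, b, by simp⟩
  rw [hII1]
  -- key step: I1 ≤ J ⊔ m • I1
  have key : I1 ≤ J ⊔ IsLocalRing.maximalIdeal B • I1 := by
    rw [hI1, Ideal.span_le]
    rintro _ ⟨b, rfl⟩
    obtain ⟨a, haA, ham⟩ := hres b
    have hσa : σ a = a := by
      rw [hA] at haA
      exact haA
    have hm : b - a ∈ Ideal.span (Set.range y) := by rw [hy]; exact ham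
    obtain ⟨c, hc⟩ := (Submodule.mem_span_range_iff_exists_fun B).mp hm
    have hdecomp : σ b - b = (∑ i, σ (c i) * (σ (y i) - y i))
        + ∑ i, y i * (σ (c i) - c i) := by
      have h1 : σ b - b = σ (b - a) - (b - a) := by
        rw [map_sub, hσa]; ring
      rw [h1, ← hc]
      rw [map_sum]
      simp only [smul_eq_mul, map_mul]
      rw [← Finset.sum_sub_distrib, ← Finset.sum_add_distrib]
      apply Finset.sum_congr rfl
      intro i _
      ring
    rw [hdecomp]
    apply Submodule.add_mem
    · apply Submodule.mem_sup_left
      exact Ideal.sum_mem _ fun i _ =>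
        Ideal.mul_mem_left _ _ (Ideal.subset_span ⟨i, rfl⟩)
    · apply Submodule.mem_sup_right
      exact Ideal.sum_mem _ fun i _ =>
        Submodule.smul_mem_smul (by rw [← hy]; exact Ideal.subset_span ⟨i, rfl⟩ :
          y i ∈ IsLocalRing.maximalIdeal B) (hmemI1 (c i))
  -- Nakayama
  have hfg : I1.FG := IsNoetherian.noetherian I1
  have hjac : IsLocalRing.maximalIdeal B ≤ Ideal.jacobson ⊥ :=
    (IsLocalRing.jacobson_eq_maximalIdeal ⊥ bot_ne_top).ge
  exact le_antisymm (Submodule.le_of_le_smul_of_le_jacobson_bot hfg hjac key) hJI1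
end

section
/- Let B be a regular local ring with a p-cyclic group G of local automorphisms, k_A → k_B an isomorphism, and (y₁,…,y_d) generators of m_B. If the augmentation ideal I_G is principal, then there exists an index i with I_G = B·(σ(y_i) − y_i). -/
/-- For a `p`-cyclic action by local automorphisms on a regular local ring `B`
with `k_A ≅ k_B` and generators `(y₁, …, y_d)` of `m_B`: if the augmentation
ideal is principal, then `I_G = B·(σ(yᵢ) − yᵢ)` for some index `i`. -/
theorem augmentation_generator_among_parameters
    {B : Type*} [CommRing B] [IsLocalRing B] (hreg : IsRegularLocal B)
    (p : ℕ) (hp : p.Prime) (σ : B ≃+* B) (horder : orderOf σ = p)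
    (hloc : ∀ b ∈ IsLocalRing.maximalIdeal B, σ b ∈ IsLocalRing.maximalIdeal B)
    (A : Subring B) (hA : A = RingHom.eqLocus (σ : B →+* B) (RingHom.id B))
    (hres : ∀ b : B, ∃ a ∈ A, b - a ∈ IsLocalRing.maximalIdeal B)
    (d : ℕ) (y : Fin d → B)
    (hy : Ideal.span (Set.range y) = IsLocalRing.maximalIdeal B)
    (IG : Ideal B) (hIG : IG = Ideal.span {x | ∃ (k : ℕ) (b : B), x = (σ ^ k) b - b})
    (hprin : IG.IsPrincipal) :
    ∃ i : Fin d, IG = Ideal.span {σ (y i) - y i} := by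
  classical
  obtain ⟨hnoeth, -⟩ := hreg
  -- d is positive
  have hd : 0 < d := by
    rcases Nat.eq_zero_or_pos d with h0 | h; swap
    · exact h
    exfalso
    subst h0
    have hmbot : IsLocalRing.maximalIdeal B = ⊥ := by
      rw [← hy]
      have : Set.range y = ∅ := Set.range_eq_empty y
      simp [this]
    have hσ1 : σ = 1 := by
      ext b
      obtain ⟨a, haA, hba⟩ := hres b
      rw [hmbot, Submodule.mem_bot, sub_eq_zero] at hba
      subst hba
      rw [hA] at haA
      exact haA
    rw [hσ1, orderOf_one] at horder
    exact hp.one_lt.ne horder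
  set g : Fin d → B := fun i => σ (y i) - y i with hg
  set J : Ideal B := Ideal.span (Set.range g) with hJ
  have hmemIG : ∀ b : B, σ b - b ∈ IG := by
    intro b
    rw [hIG]
    exact Ideal.subset_span ⟨1, b, by simp⟩
  have hJle : J ≤ IG := by
    rw [hJ, Ideal.span_le]
    rintro _ ⟨i, rfl⟩
    exact hmemIG (y i)
  set T : Ideal B := J ⊔ (IsLocalRing.maximalIdeal B) • IG with hT
  -- key: for m in the maximal ideal, σ m - m ∈ T
  have key : ∀ b ∈ IsLocalRing.maximalIdeal B, σ b - b ∈ T := by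
    intro b hb
    rw [← hy] at hb
    induction hb using Submodule.span_induction with
    | mem x hx =>
        obtain ⟨i, rfl⟩ := hx
        exact le_sup_left (a := J) (Ideal.subset_span ⟨i, rfl⟩)
    | zero => simp
    | add u v hu hv ihu ihv =>
        have : σ (u + v) - (u + v) = (σ u - u) + (σ v - v) := by
          rw [map_add]; ring
        rw [this]; exact add_mem ihu ihv
    | smul c u hu ih =>
        have hum : u ∈ IsLocalRing.maximalIdeal B := hy ▸ hu
        have h1 : c * (σ u - u) ∈ T := Ideal.mul_mem_left _ c ih
        have h2 : σ u * (σ c - c) ∈ (IsLocalRing.maximalIdeal B) • IG := by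
          rw [Ideal.smul_eq_mul]
          exact Ideal.mul_mem_mul (hloc u hum) (hmemIG c)
        have : σ (c • u) - c • u = c * (σ u - u) + σ u * (σ c - c) := by
          simp only [smul_eq_mul, map_mul]; ring
        rw [this]
        exact add_mem h1 (le_sup_right (a := J) h2)
  -- every generator of IG lies in T
  have hpowm : ∀ (j : ℕ), ∀ x ∈ IsLocalRing.maximalIdeal B,
      (σ ^ j) x ∈ IsLocalRing.maximalIdeal B := by
    intro j
    induction j with
    | zero => intro x hx; simpa using hx
    | succ n ih =>
        intro x hx
        have : (σ ^ (n + 1)) x = σ ((σ ^ n) x) := by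
          rw [pow_succ']; rfl
        rw [this]
        exact hloc _ (ih x hx)
  have hIGle : IG ≤ T := by
    rw [hIG, Ideal.span_le]
    rintro x ⟨k, b, rfl⟩
    obtain ⟨a, haA, ham⟩ := hres b
    have hfa : ∀ j : ℕ, (σ ^ j) a = a := by
      intro j
      induction j with
      | zero => rfl
      | succ n ih =>
          have : (σ ^ (n + 1)) a = σ ((σ ^ n) a) := by rw [pow_succ']; rfl
          rw [this, ih]
          rw [hA] at haA
          exact haA
    have heq : (σ ^ k) b - b = (σ ^ k) (b - a) - (b - a) := by
      rw [map_sub, hfa k]; ring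
    rw [heq]
    have tele : ∀ n : ℕ, (σ ^ n) (b - a) - (b - a)
        = ∑ j ∈ Finset.range n, (σ ((σ ^ j) (b - a)) - (σ ^ j) (b - a)) := by
      intro n
      induction n with
      | zero =>
          simp only [pow_zero, Finset.range_zero, Finset.sum_empty]
          exact sub_eq_zero_of_eq rfl
      | succ n ih =>
          rw [Finset.sum_range_succ, ← ih]
          have : (σ ^ (n + 1)) (b - a) = σ ((σ ^ n) (b - a)) := by rw [pow_succ']; rfl
          rw [this]; ring
    rw [tele k]
    exact Ideal.sum_mem _ fun j _ => key _ (hpowm j _ ham)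
  -- Nakayama: IG = J
  have hfg : IG.FG := IsNoetherian.noetherian IG
  have hIGJ : IG = J :=
    le_antisymm
      (Submodule.le_of_le_smul_of_le_jacobson_bot hfg
        (IsLocalRing.maximalIdeal_le_jacobson ⊥) hIGle)
      hJle
  -- now use principality
  obtain ⟨x, hx⟩ := hprin
  have hxJ : x ∈ J := hIGJ ▸ (hx ▸ Ideal.subset_span rfl)
  obtain ⟨c, hc⟩ := Ideal.mem_span_range_iff_exists_fun.mp (hJ ▸ hxJ)
  have hgx : ∀ i, ∃ bi, bi * x = g i := by
    intro i
    have hmem : g i ∈ IG := hJle (Ideal.subset_span ⟨i, rfl⟩)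
    rw [hx] at hmem
    exact Ideal.mem_span_singleton'.mp hmem
  choose bb hbb using hgx
  have hux : (∑ i, c i * bb i) * x = x := by
    rw [Finset.sum_mul]
    calc ∑ i, c i * bb i * x = ∑ i, c i * (bb i * x) := by
          simp [mul_assoc]
      _ = ∑ i, c i * g i := by simp [hbb]
      _ = x := hc
  by_cases hcase : ∃ i, c i * bb i ∉ IsLocalRing.maximalIdeal B
  · obtain ⟨i, hi⟩ := hcase
    have hunit : IsUnit (c i * bb i) := by
      by_contra h
      exact hi (IsLocalRing.mem_maximalIdeal _ |>.mpr h)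
    have hbunit : IsUnit (bb i) := isUnit_of_mul_isUnit_right hunit
    obtain ⟨v, hv⟩ := hbunit.exists_left_inv
    refine ⟨i, hx.trans (le_antisymm ?_ ?_)⟩
    · refine (Submodule.span_singleton_le_iff_mem _ _).mpr ?_
      have hxe : x = v * (bb i * x) := by rw [← mul_assoc, hv, one_mul]
      rw [hxe, hbb i]
      exact Ideal.mul_mem_left _ v (Ideal.subset_span rfl)
    · rw [Ideal.span_le, Set.singleton_subset_iff]
      show g i ∈ Submodule.span B {x}
      rw [← hbb i]
      exact Ideal.mul_mem_left _ (bb i) (Submodule.mem_span_singleton_self x)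
  · push_neg at hcase
    have hsm : (∑ i, c i * bb i) ∈ IsLocalRing.maximalIdeal B :=
      Ideal.sum_mem _ fun i _ => hcase i
    have hu : IsUnit (1 - ∑ i, c i * bb i) :=
      IsLocalRing.isUnit_one_sub_self_of_mem_nonunits _ hsm
    have hx0 : x = 0 := by
      have : (1 - ∑ i, c i * bb i) * x = 0 := by rw [sub_mul, one_mul, hux, sub_self]
      exact (hu.mul_right_eq_zero).mp this
    refine ⟨⟨0, hd⟩, ?_⟩
    have hIGbot : IG = ⊥ := by rw [hx, hx0]; exact Submodule.span_zero_singleton B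
    have hg0 : g ⟨0, hd⟩ = 0 := by
      have := hJle (Ideal.subset_span ⟨⟨0, hd⟩, rfl⟩)
      rwa [hIGbot, Submodule.mem_bot] at this
    show IG = Ideal.span {g ⟨0, hd⟩}
    rw [hIGbot, hg0]
    exact (Ideal.span_singleton_eq_bot.mpr rfl).symm
end

section
/- Let k be a field of characteristic p > 0 and B = k(Z)[Y, X₁, X₂] localized at (Y, X₁, X₂), with the order-p automorphism σ determined by σ(Z) = Z + X₁, σ(Y) = Y + X₂, σ(X_i) = X_i, σ|_k = id. Then σ acts on B by local automorphisms, G = ⟨σ⟩ acts as a pseudo-reflection (Y, X₁, X₂ with X₁, X₂ invariant), but the augmentation ideal I_G = B·X₁ + B·X₂ is not principal. -/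
set_option maxHeartbeats 1000000
set_option linter.unusedSectionVars false


/-- `k(Z)`, the rational function field over `k`. -/
noncomputable abbrev RatFunc' (k : Type) [Field k] := FractionRing (Polynomial k)

/-- `k(Z)[Y, X₁, X₂]`, the polynomial ring in the variables `Y = X 0`,
`X₁ = X 1`, `X₂ = X 2` over `k(Z)`. -/
noncomputable abbrev PolyS (k : Type) [Field k] := MvPolynomial (Fin 3) (RatFunc' k)

namespace WildAux
open MvPolynomial IsLocalRing

/-! ### generic "difference in ideal" lemmas -/

lemma poly_diff_mem {R S : Type*} [CommRing R] [CommRing S] (f g : Polynomial R →+* S)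
    (J : Ideal S) (hC : ∀ a, f (Polynomial.C a) - g (Polynomial.C a) ∈ J)
    (hX : f Polynomial.X - g Polynomial.X ∈ J) (q : Polynomial R) : f q - g q ∈ J := by
  have key : (Ideal.Quotient.mk J).comp f = (Ideal.Quotient.mk J).comp g :=
    Polynomial.ringHom_ext (fun a => Ideal.Quotient.eq.mpr (hC a)) (Ideal.Quotient.eq.mpr hX)
  exact Ideal.Quotient.eq.mp (RingHom.congr_fun key q)

lemma mv_diff_mem {R S : Type*} {σ : Type*} [CommRing R] [CommRing S]
    (f g : MvPolynomial σ R →+* S) (J : Ideal S)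
    (hC : ∀ r, f (C r) - g (C r) ∈ J) (hX : ∀ i, f (X i) - g (X i) ∈ J)
    (a : MvPolynomial σ R) : f a - g a ∈ J := by
  have key : (Ideal.Quotient.mk J).comp f = (Ideal.Quotient.mk J).comp g :=
    MvPolynomial.ringHom_ext (fun r => Ideal.Quotient.eq.mpr (hC r))
      (fun i => Ideal.Quotient.eq.mpr (hX i))
  exact Ideal.Quotient.eq.mp (RingHom.congr_fun key a)

lemma loc_diff_mem {R S T : Type*} [CommRing R] [CommRing S] [CommRing T]
    (M : Submonoid R) [Algebra R S] [IsLocalization M S] (f g : S →+* T) (J : Ideal T)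
    (h : ∀ r : R, f (algebraMap R S r) - g (algebraMap R S r) ∈ J) (x : S) :
    f x - g x ∈ J := by
  have key : (Ideal.Quotient.mk J).comp f = (Ideal.Quotient.mk J).comp g := by
    apply IsLocalization.ringHom_ext M
    ext r
    exact Ideal.Quotient.eq.mpr (h r)
  exact Ideal.Quotient.eq.mp (RingHom.congr_fun key x)

section Main

variable (k : Type) [Field k] (m : Ideal (PolyS k)) [m.IsPrime]
variable (L : Type) [CommRing L] [Algebra (PolyS k) L] [IsLocalization.AtPrime L m]
variable [IsLocalRing L]

noncomputable abbrev fm : PolyS k →+* L := algebraMap _ _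
noncomputable abbrev algK : Polynomial k →+* RatFunc' k := algebraMap _ _

/-- the image of `Z` in `L`. -/
noncomputable def Zel : L := fm k L (C (algK k Polynomial.X))

/-- the embedding of `k` into `L`. -/
noncomputable def baseHom : k →+* L :=
  (fm k L).comp ((C : RatFunc' k →+* PolyS k).comp ((algK k).comp Polynomial.C))

lemma baseHom_eq (a : k) :
    baseHom k L a = fm k L (C (algK k (Polynomial.C a))) := rfl

variable {m L} (c1 c2 : L)

/-- evaluation of `k[Z]` at `Z + c1`. -/
noncomputable def gHom : Polynomial k →+* L :=
  Polynomial.eval₂RingHom (baseHom k L) (Zel k L + c1)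

lemma gHom_C (a : k) :
    gHom k c1 (Polynomial.C a) = fm k L (C (algK k (Polynomial.C a))) := by
  simp [gHom, baseHom_eq]

lemma gHom_X : gHom k c1 Polynomial.X = Zel k L + c1 := by simp [gHom]

variable (hm : m = Ideal.span {X 0, X 1, X 2})

include hm in
lemma mem_primeCompl_of_C {r : RatFunc' k} (hr : r ≠ 0) : C r ∈ m.primeCompl := by
  intro hmem
  have hle : m ≤ RingHom.ker (constantCoeff : PolyS k →+* RatFunc' k) := by
    rw [hm, Ideal.span_le]
    rintro x (rfl | rfl | rfl) <;> simp [RingHom.mem_ker]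
  have := hle hmem
  rw [RingHom.mem_ker, constantCoeff_C] at this
  exact hr this

variable (hc1 : c1 ∈ maximalIdeal L) (hc2 : c2 ∈ maximalIdeal L)

include hc1 in
lemma gHom_diff (q : Polynomial k) :
    gHom k c1 q - fm k L (C (algK k q)) ∈ maximalIdeal L := by
  apply poly_diff_mem (gHom k c1)
    ((fm k L).comp ((C : RatFunc' k →+* PolyS k).comp (algK k)))
  · intro a
    show gHom k c1 (Polynomial.C a) - fm k L (C (algK k (Polynomial.C a))) ∈ _
    rw [gHom_C, sub_self]
    exact Ideal.zero_mem _
  · show gHom k c1 Polynomial.X - fm k L (C (algK k Polynomial.X)) ∈ _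
    rw [gHom_X]
    show Zel k L + c1 - Zel k L ∈ _
    rwa [add_sub_cancel_left]

include hm hc1 in
lemma gHom_unit {q : Polynomial k} (hq : q ≠ 0) : IsUnit (gHom k c1 q) := by
  have h1 : algK k q ≠ 0 :=
    (map_ne_zero_iff _ (IsFractionRing.injective (Polynomial k) (RatFunc' k))).mpr hq
  have hu : IsUnit (fm k L (C (algK k q))) :=
    IsLocalization.map_units (M := m.primeCompl) L
      ⟨C (algK k q), mem_primeCompl_of_C k hm h1⟩
  by_contra hcon
  have hmem : gHom k c1 q ∈ maximalIdeal L :=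
    (IsLocalRing.mem_maximalIdeal _).mpr hcon
  have h2 : fm k L (C (algK k q)) ∈ maximalIdeal L := by
    have h3 := Ideal.sub_mem _ hmem (gHom_diff k c1 hc1 q)
    rwa [sub_sub_cancel] at h3
  exact (IsLocalRing.mem_maximalIdeal _).mp h2 hu

/-- the coefficient homomorphism `k(Z) → L`, `Z ↦ Z + c1`. -/
noncomputable def cHom : RatFunc' k →+* L :=
  IsLocalization.lift (M := nonZeroDivisors (Polynomial k))
    (g := gHom k c1) (fun y => gHom_unit k c1 hm hc1 (nonZeroDivisors.ne_zero y.2))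

lemma cHom_algK (q : Polynomial k) : cHom k c1 hm hc1 (algK k q) = gHom k c1 q :=
  IsLocalization.lift_eq _ q

include hc1 in
lemma cHom_diff (r : RatFunc' k) :
    cHom k c1 hm hc1 r - fm k L (C r) ∈ maximalIdeal L := by
  apply loc_diff_mem (nonZeroDivisors (Polynomial k))
    (cHom k c1 hm hc1) ((fm k L).comp (C : RatFunc' k →+* PolyS k))
  intro q
  show cHom k c1 hm hc1 (algK k q) - fm k L (C (algK k q)) ∈ _
  rw [cHom_algK]
  exact gHom_diff k c1 hc1 q

/-- the variable assignment `Y ↦ Y + c2`, `X₁ ↦ X₁`, `X₂ ↦ X₂`. -/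
noncomputable def vVec : Fin 3 → L := ![fm k L (X 0) + c2, fm k L (X 1), fm k L (X 2)]

/-- the twisted evaluation `PolyS k → L`. -/
noncomputable def psiHom : PolyS k →+* L :=
  eval₂Hom (cHom k c1 hm hc1) (vVec k c2)

lemma psiHom_C (r : RatFunc' k) : psiHom k c1 c2 hm hc1 (C r) = cHom k c1 hm hc1 r :=
  eval₂Hom_C _ _ r

lemma psiHom_X (i : Fin 3) : psiHom k c1 c2 hm hc1 (X i) = vVec k c2 i :=
  eval₂Hom_X' _ _ i

include hc2 in
lemma psiHom_diff (a : PolyS k) :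
    psiHom k c1 c2 hm hc1 a - fm k L a ∈ maximalIdeal L := by
  apply mv_diff_mem (psiHom k c1 c2 hm hc1) (fm k L)
  · intro r
    show psiHom k c1 c2 hm hc1 (C r) - fm k L (C r) ∈ _
    rw [psiHom_C]
    exact cHom_diff k c1 hm hc1 r
  · intro i
    show psiHom k c1 c2 hm hc1 (X i) - fm k L (X i) ∈ _
    rw [psiHom_X]
    fin_cases i
    · show fm k L (X 0) + c2 - fm k L (X 0) ∈ _
      rwa [add_sub_cancel_left]
    · show fm k L (X 1) - fm k L (X 1) ∈ _
      rw [sub_self]; exact Ideal.zero_mem _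
    · show fm k L (X 2) - fm k L (X 2) ∈ _
      rw [sub_self]; exact Ideal.zero_mem _

include hc2 in
lemma psiHom_unit {a : PolyS k} (ha : a ∈ m.primeCompl) :
    IsUnit (psiHom k c1 c2 hm hc1 a) := by
  have hu : IsUnit (fm k L a) := IsLocalization.map_units (M := m.primeCompl) L ⟨a, ha⟩
  by_contra hcon
  have hmem : psiHom k c1 c2 hm hc1 a ∈ maximalIdeal L :=
    (IsLocalRing.mem_maximalIdeal _).mpr hcon
  have h2 : fm k L a ∈ maximalIdeal L := by
    have h3 := Ideal.sub_mem _ hmem (psiHom_diff k c1 c2 hm hc1 hc2 a)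
    rwa [sub_sub_cancel] at h3
  exact (IsLocalRing.mem_maximalIdeal _).mp h2 hu

/-- the twisted endomorphism of `L`. -/
noncomputable def endo : L →+* L :=
  IsLocalization.lift (M := m.primeCompl)
    (g := psiHom k c1 c2 hm hc1) (fun y => psiHom_unit k c1 c2 hm hc1 hc2 y.2)

lemma endo_fm (a : PolyS k) :
    endo k c1 c2 hm hc1 hc2 (fm k L a) = psiHom k c1 c2 hm hc1 a :=
  IsLocalization.lift_eq _ a

lemma endo_base (a : k) :
    endo k c1 c2 hm hc1 hc2 (baseHom k L a) = baseHom k L a := by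
  rw [baseHom_eq]
  show endo k c1 c2 hm hc1 hc2 (fm k L (C (algK k (Polynomial.C a)))) = _
  rw [endo_fm, psiHom_C, cHom_algK, gHom_C]

lemma endo_Zel : endo k c1 c2 hm hc1 hc2 (Zel k L) = Zel k L + c1 := by
  show endo k c1 c2 hm hc1 hc2 (fm k L (C (algK k Polynomial.X))) = _
  rw [endo_fm, psiHom_C, cHom_algK, gHom_X]

lemma endo_X0 : endo k c1 c2 hm hc1 hc2 (fm k L (X 0)) = fm k L (X 0) + c2 := by
  rw [endo_fm, psiHom_X]; rfl

lemma endo_X1 : endo k c1 c2 hm hc1 hc2 (fm k L (X 1)) = fm k L (X 1) := by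
  rw [endo_fm, psiHom_X]; rfl

lemma endo_X2 : endo k c1 c2 hm hc1 hc2 (fm k L (X 2)) = fm k L (X 2) := by
  rw [endo_fm, psiHom_X]; rfl

include m in
/-- master comparison lemma for ring homs out of `L`. -/
lemma master_diff {T : Type*} [CommRing T] (f g : L →+* T) (J : Ideal T)
    (hbase : ∀ a : k, f (baseHom k L a) - g (baseHom k L a) ∈ J)
    (hZ : f (Zel k L) - g (Zel k L) ∈ J)
    (hX : ∀ i : Fin 3, f (fm k L (X i)) - g (fm k L (X i)) ∈ J)
    (x : L) : f x - g x ∈ J := by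
  apply loc_diff_mem m.primeCompl f g J ?_ x
  intro r
  show f.comp (fm k L) r - g.comp (fm k L) r ∈ J
  apply mv_diff_mem (f.comp (fm k L)) (g.comp (fm k L)) J ?_ ?_ r
  · intro s
    show (f.comp ((fm k L).comp (C : RatFunc' k →+* PolyS k))) s -
      (g.comp ((fm k L).comp (C : RatFunc' k →+* PolyS k))) s ∈ J
    apply loc_diff_mem (nonZeroDivisors (Polynomial k)) _ _ J ?_ s
    intro q
    show (f.comp (((fm k L).comp (C : RatFunc' k →+* PolyS k)).comp (algK k))) q -
      (g.comp (((fm k L).comp (C : RatFunc' k →+* PolyS k)).comp (algK k))) q ∈ J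
    apply poly_diff_mem _ _ J ?_ ?_ q
    · intro a
      exact hbase a
    · exact hZ
  · intro i
    exact hX i

include m in
lemma master_eq {T : Type*} [CommRing T] (f g : L →+* T)
    (hbase : ∀ a : k, f (baseHom k L a) = g (baseHom k L a))
    (hZ : f (Zel k L) = g (Zel k L))
    (hX : ∀ i : Fin 3, f (fm k L (X i)) = g (fm k L (X i)))
    (x : L) : f x = g x := by
  have h := master_diff k (m := m) f g ⊥ (fun a => by rw [hbase a, sub_self]; exact Ideal.zero_mem _)
    (by rw [hZ, sub_self]; exact Ideal.zero_mem _)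
    (fun i => by rw [hX i, sub_self]; exact Ideal.zero_mem _) x
  rw [Ideal.mem_bot, sub_eq_zero] at h
  exact h

include hm in
lemma X_mem_max (i : Fin 3) : fm k L (X i) ∈ maximalIdeal L := by
  have hXi : (X i : PolyS k) ∈ m := by
    rw [hm]
    apply Ideal.subset_span
    fin_cases i <;> simp
  exact (IsLocalization.AtPrime.to_map_mem_maximal_iff L m (X i) ‹_›).mpr hXi

variable (m L) in
/-- the automorphism `σ` as a ring hom. -/
noncomputable def sigEndo : L →+* L :=
  endo k (fm k L (X 1)) (fm k L (X 2)) hm (X_mem_max k hm 1) (X_mem_max k hm 2)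

variable (m L) in
/-- the inverse automorphism as a ring hom. -/
noncomputable def tauEndo : L →+* L :=
  endo k (-fm k L (X 1)) (-fm k L (X 2)) hm
    (neg_mem (X_mem_max k hm 1)) (neg_mem (X_mem_max k hm 2))

lemma sigEndo_base (a : k) : sigEndo k m L hm (baseHom k L a) = baseHom k L a :=
  endo_base k _ _ hm _ _ a

lemma sigEndo_Zel : sigEndo k m L hm (Zel k L) = Zel k L + fm k L (X 1) :=
  endo_Zel k _ _ hm _ _

lemma sigEndo_X0 : sigEndo k m L hm (fm k L (X 0)) = fm k L (X 0) + fm k L (X 2) :=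
  endo_X0 k _ _ hm _ _

lemma sigEndo_X1 : sigEndo k m L hm (fm k L (X 1)) = fm k L (X 1) :=
  endo_X1 k _ _ hm _ _

lemma sigEndo_X2 : sigEndo k m L hm (fm k L (X 2)) = fm k L (X 2) :=
  endo_X2 k _ _ hm _ _

lemma tauEndo_base (a : k) : tauEndo k m L hm (baseHom k L a) = baseHom k L a :=
  endo_base k _ _ hm _ _ a

lemma tauEndo_Zel : tauEndo k m L hm (Zel k L) = Zel k L + -fm k L (X 1) :=
  endo_Zel k _ _ hm _ _

lemma tauEndo_X0 : tauEndo k m L hm (fm k L (X 0)) = fm k L (X 0) + -fm k L (X 2) :=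
  endo_X0 k _ _ hm _ _

lemma tauEndo_X1 : tauEndo k m L hm (fm k L (X 1)) = fm k L (X 1) :=
  endo_X1 k _ _ hm _ _

lemma tauEndo_X2 : tauEndo k m L hm (fm k L (X 2)) = fm k L (X 2) :=
  endo_X2 k _ _ hm _ _

lemma tau_sig : (tauEndo k m L hm).comp (sigEndo k m L hm) = RingHom.id L := by
  apply RingHom.ext
  apply master_eq k (m := m)
  · intro a
    show tauEndo k m L hm (sigEndo k m L hm (baseHom k L a)) = baseHom k L a
    rw [sigEndo_base, tauEndo_base]
  · show tauEndo k m L hm (sigEndo k m L hm (Zel k L)) = Zel k L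
    rw [sigEndo_Zel, map_add, tauEndo_Zel, tauEndo_X1]
    ring
  · intro i
    show tauEndo k m L hm (sigEndo k m L hm (fm k L (X i))) = fm k L (X i)
    fin_cases i
    · rw [show ((⟨0, by norm_num⟩ : Fin 3)) = (0 : Fin 3) from rfl,
        sigEndo_X0, map_add, tauEndo_X0, tauEndo_X2]
      ring
    · rw [show ((⟨1, by norm_num⟩ : Fin 3)) = (1 : Fin 3) from rfl, sigEndo_X1, tauEndo_X1]
    · rw [show ((⟨2, by norm_num⟩ : Fin 3)) = (2 : Fin 3) from rfl, sigEndo_X2, tauEndo_X2]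

lemma sig_tau : (sigEndo k m L hm).comp (tauEndo k m L hm) = RingHom.id L := by
  apply RingHom.ext
  apply master_eq k (m := m)
  · intro a
    show sigEndo k m L hm (tauEndo k m L hm (baseHom k L a)) = baseHom k L a
    rw [tauEndo_base, sigEndo_base]
  · show sigEndo k m L hm (tauEndo k m L hm (Zel k L)) = Zel k L
    rw [tauEndo_Zel, map_add, map_neg, sigEndo_Zel, sigEndo_X1]
    ring
  · intro i
    show sigEndo k m L hm (tauEndo k m L hm (fm k L (X i))) = fm k L (X i)
    fin_cases i
    · rw [show ((⟨0, by norm_num⟩ : Fin 3)) = (0 : Fin 3) from rfl,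
        tauEndo_X0, map_add, map_neg, sigEndo_X0, sigEndo_X2]
      ring
    · rw [show ((⟨1, by norm_num⟩ : Fin 3)) = (1 : Fin 3) from rfl, tauEndo_X1, sigEndo_X1]
    · rw [show ((⟨2, by norm_num⟩ : Fin 3)) = (2 : Fin 3) from rfl, tauEndo_X2, sigEndo_X2]

variable (m L) in
/-- the automorphism `σ`. -/
noncomputable def sigma : L ≃+* L :=
  RingEquiv.ofRingHom (sigEndo k m L hm) (tauEndo k m L hm) (sig_tau k hm) (tau_sig k hm)

lemma sigma_apply (x : L) : sigma k m L hm x = sigEndo k m L hm x := rfl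

lemma sigma_pow_succ (n : ℕ) (x : L) :
    (sigma k m L hm ^ (n + 1)) x = sigma k m L hm ((sigma k m L hm ^ n) x) := by
  rw [pow_succ']
  rfl

lemma sigma_pow_base (n : ℕ) (a : k) :
    (sigma k m L hm ^ n) (baseHom k L a) = baseHom k L a := by
  induction n with
  | zero => rw [pow_zero]; rfl
  | succ n ih => rw [sigma_pow_succ, ih, sigma_apply, sigEndo_base]

lemma sigma_pow_X1 (n : ℕ) :
    (sigma k m L hm ^ n) (fm k L (X 1)) = fm k L (X 1) := by
  induction n with
  | zero => rw [pow_zero]; rfl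
  | succ n ih => rw [sigma_pow_succ, ih, sigma_apply, sigEndo_X1]

lemma sigma_pow_X2 (n : ℕ) :
    (sigma k m L hm ^ n) (fm k L (X 2)) = fm k L (X 2) := by
  induction n with
  | zero => rw [pow_zero]; rfl
  | succ n ih => rw [sigma_pow_succ, ih, sigma_apply, sigEndo_X2]

lemma sigma_pow_Zel (n : ℕ) :
    (sigma k m L hm ^ n) (Zel k L) = Zel k L + n • fm k L (X 1) := by
  induction n with
  | zero => rw [pow_zero, zero_nsmul, add_zero]; rfl
  | succ n ih =>
    rw [sigma_pow_succ, ih, sigma_apply, map_add, map_nsmul]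
    show sigEndo k m L hm (Zel k L) + n • sigEndo k m L hm (fm k L (X 1)) = _
    rw [sigEndo_Zel, sigEndo_X1, succ_nsmul]
    ring

lemma sigma_pow_X0 (n : ℕ) :
    (sigma k m L hm ^ n) (fm k L (X 0)) = fm k L (X 0) + n • fm k L (X 2) := by
  induction n with
  | zero => rw [pow_zero, zero_nsmul, add_zero]; rfl
  | succ n ih =>
    rw [sigma_pow_succ, ih, sigma_apply, map_add, map_nsmul]
    show sigEndo k m L hm (fm k L (X 0)) + n • sigEndo k m L hm (fm k L (X 2)) = _
    rw [sigEndo_X0, sigEndo_X2, succ_nsmul]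
    ring

lemma cast_p_zero (p : ℕ) [CharP k p] : (p : L) = 0 := by
  rw [← map_natCast (baseHom k L) p, CharP.cast_eq_zero, map_zero]

lemma nsmul_p_zero (p : ℕ) [CharP k p] (x : L) : p • x = 0 := by
  rw [nsmul_eq_mul, cast_p_zero k p, zero_mul]

lemma sigma_pow_p (p : ℕ) [CharP k p] : sigma k m L hm ^ p = 1 := by
  apply RingEquiv.ext
  intro x
  show (sigma k m L hm ^ p).toRingHom x = RingHom.id L x
  apply master_eq k (m := m)
  · intro a
    exact sigma_pow_base k hm p a
  · show (sigma k m L hm ^ p) (Zel k L) = Zel k L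
    rw [sigma_pow_Zel, nsmul_p_zero k p, add_zero]
  · intro i
    show (sigma k m L hm ^ p) (fm k L (X i)) = fm k L (X i)
    fin_cases i
    · rw [show ((⟨0, by norm_num⟩ : Fin 3)) = (0 : Fin 3) from rfl, sigma_pow_X0,
        nsmul_p_zero k p, add_zero]
    · rw [show ((⟨1, by norm_num⟩ : Fin 3)) = (1 : Fin 3) from rfl, sigma_pow_X1]
    · rw [show ((⟨2, by norm_num⟩ : Fin 3)) = (2 : Fin 3) from rfl, sigma_pow_X2]

include m in
lemma primeCompl_le : m.primeCompl ≤ nonZeroDivisors (PolyS k) := by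
  intro s hs
  have hs0 : s ≠ 0 := fun h0 => hs (h0 ▸ m.zero_mem)
  exact mem_nonZeroDivisors_of_ne_zero hs0

include m in
lemma fm_injective : Function.Injective (fm k L) :=
  IsLocalization.injective L (primeCompl_le k (m := m))

include m in
lemma fm_X_ne_zero (i : Fin 3) : fm k L (X i) ≠ 0 := by
  intro h
  have : (X i : PolyS k) = 0 := fm_injective k (m := m) (L := L) (by rw [h, map_zero])
  exact MvPolynomial.X_ne_zero i this

lemma sigma_ne_one : sigma k m L hm ≠ 1 := by
  intro h
  have h0 : sigma k m L hm (fm k L (X 0)) = fm k L (X 0) := by rw [h]; rfl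
  rw [sigma_apply, sigEndo_X0] at h0
  rw [add_eq_left] at h0
  exact fm_X_ne_zero k (m := m) 2 h0

lemma sigma_orderOf (p : ℕ) (hp : p.Prime) [CharP k p] : orderOf (sigma k m L hm) = p := by
  haveI := Fact.mk hp
  exact orderOf_eq_prime (sigma_pow_p k hm p) (sigma_ne_one k hm)

lemma sigma_mem_max (b : L) (hb : b ∈ maximalIdeal L) :
    sigma k m L hm b ∈ maximalIdeal L := by
  rw [IsLocalRing.mem_maximalIdeal] at hb ⊢
  intro hu
  apply hb
  have h2 := hu.map (sigma k m L hm).symm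
  rwa [RingEquiv.symm_apply_apply] at h2

include hm in
lemma span_X_eq_max :
    Ideal.span {fm k L (X 0), fm k L (X 1), fm k L (X 2)} = maximalIdeal L := by
  have hmap : Ideal.map (fm k L) m =
      Ideal.span {fm k L (X 0), fm k L (X 1), fm k L (X 2)} := by
    rw [hm, Ideal.map_span, Set.image_insert_eq, Set.image_insert_eq, Set.image_singleton]
  apply le_antisymm
  · rw [Ideal.span_le]
    rintro x (rfl | rfl | rfl) <;> exact X_mem_max k hm _
  · intro x hx
    obtain ⟨⟨a, s⟩, rfl⟩ := IsLocalization.mk'_surjective m.primeCompl x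
    have ha : a ∈ m := (IsLocalization.AtPrime.mk'_mem_maximal_iff L m a s ‹_›).mp hx
    show IsLocalization.mk' L a s ∈ _
    rw [IsLocalization.mk'_eq_mul_mk'_one]
    exact Ideal.mul_mem_right _ _ (hmap ▸ Ideal.mem_map_of_mem _ ha)

lemma sigma_diff_mem (b : L) :
    sigma k m L hm b - b ∈ Ideal.span {fm k L (X 1), fm k L (X 2)} := by
  apply master_diff k (m := m) (sigEndo k m L hm) (RingHom.id L)
  · intro a
    show sigEndo k m L hm (baseHom k L a) - baseHom k L a ∈ _
    rw [sigEndo_base, sub_self]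
    exact Ideal.zero_mem _
  · show sigEndo k m L hm (Zel k L) - Zel k L ∈ _
    rw [sigEndo_Zel, add_sub_cancel_left]
    exact Ideal.subset_span (Set.mem_insert _ _)
  · intro i
    show sigEndo k m L hm (fm k L (X i)) - fm k L (X i) ∈ _
    fin_cases i
    · rw [show ((⟨0, by norm_num⟩ : Fin 3)) = (0 : Fin 3) from rfl, sigEndo_X0,
        add_sub_cancel_left]
      exact Ideal.subset_span (Set.mem_insert_of_mem _ rfl)
    · rw [show ((⟨1, by norm_num⟩ : Fin 3)) = (1 : Fin 3) from rfl, sigEndo_X1, sub_self]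
      exact Ideal.zero_mem _
    · rw [show ((⟨2, by norm_num⟩ : Fin 3)) = (2 : Fin 3) from rfl, sigEndo_X2, sub_self]
      exact Ideal.zero_mem _

lemma sigma_pow_diff_mem (n : ℕ) (b : L) :
    (sigma k m L hm ^ n) b - b ∈ Ideal.span {fm k L (X 1), fm k L (X 2)} := by
  induction n with
  | zero =>
    rw [pow_zero]
    show b - b ∈ _
    rw [sub_self]; exact Ideal.zero_mem _
  | succ n ih =>
    have h1 := sigma_diff_mem k hm ((sigma k m L hm ^ n) b)
    have h2 := Ideal.add_mem _ h1 ih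
    rw [sigma_pow_succ]
    have heq : sigma k m L hm ((sigma k m L hm ^ n) b) - b =
        sigma k m L hm ((sigma k m L hm ^ n) b) - (sigma k m L hm ^ n) b +
          ((sigma k m L hm ^ n) b - b) := by ring
    rw [heq]
    exact h2

lemma aug_ideal_eq :
    Ideal.span {x | ∃ (n : ℕ) (b : L), x = (sigma k m L hm ^ n) b - b} =
      Ideal.span {fm k L (X 1), fm k L (X 2)} := by
  apply le_antisymm
  · rw [Ideal.span_le]
    rintro x ⟨n, b, rfl⟩
    exact sigma_pow_diff_mem k hm n b
  · rw [Ideal.span_le]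
    rintro x (rfl | rfl)
    · apply Ideal.subset_span
      refine ⟨1, Zel k L, ?_⟩
      rw [pow_one, sigma_apply, sigEndo_Zel, add_sub_cancel_left]
    · apply Ideal.subset_span
      refine ⟨1, fm k L (X 0), ?_⟩
      rw [pow_one, sigma_apply, sigEndo_X0, add_sub_cancel_left]

include hm in
lemma fmX_not_dvd {i j : Fin 3} (hij : j ≠ i)
    (hiset : (X i : PolyS k) ∈ ({X 0, X 1, X 2} : Set (PolyS k))) :
    ¬ (fm k L (X i) ∣ fm k L (X j)) := by
  rintro ⟨t, ht⟩
  obtain ⟨⟨a, s⟩, rfl⟩ := IsLocalization.mk'_surjective m.primeCompl t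
  have h2 : fm k L (X j) * fm k L (s : PolyS k) = fm k L (X i) * fm k L a := by
    rw [ht, mul_assoc, IsLocalization.mk'_spec]
  have h3 : (X j : PolyS k) * (s : PolyS k) = (X i) * a := by
    apply fm_injective k (m := m) (L := L)
    rw [map_mul, map_mul]
    exact h2
  classical
  set E : PolyS k →+* PolyS k :=
    (eval₂Hom (C : RatFunc' k →+* PolyS k) (fun l => if l = i then 0 else X l)) with hE
  have hEXi : E (X i) = 0 := by rw [hE, eval₂Hom_X', if_pos rfl]
  have hEXj : E (X j) = X j := by rw [hE, eval₂Hom_X', if_neg hij]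
  have h4 : E ((X j : PolyS k) * (s : PolyS k)) = 0 := by
    rw [h3, map_mul, hEXi, zero_mul]
  rw [map_mul, hEXj] at h4
  have h5 : E (s : PolyS k) = 0 := by
    rcases mul_eq_zero.mp h4 with h | h
    · exact absurd h (MvPolynomial.X_ne_zero j)
    · exact h
  have hdiff : (s : PolyS k) - E (s : PolyS k) ∈ Ideal.span {(X i : PolyS k)} := by
    apply mv_diff_mem (RingHom.id _) E
    · intro r
      show C r - E (C r) ∈ _
      rw [hE, eval₂Hom_C, sub_self]
      exact Ideal.zero_mem _
    · intro l
      show X l - E (X l) ∈ _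
      rw [hE, eval₂Hom_X']
      by_cases hl : l = i
      · rw [if_pos hl, sub_zero, hl]
        exact Ideal.subset_span rfl
      · rw [if_neg hl, sub_self]
        exact Ideal.zero_mem _
  rw [h5, sub_zero] at hdiff
  have hle : Ideal.span {(X i : PolyS k)} ≤ m := by
    rw [hm]
    exact Ideal.span_mono (Set.singleton_subset_iff.mpr hiset)
  exact s.2 (hle hdiff)

include hm in
lemma not_principal :
    ¬ (Ideal.span {fm k L (X 1), fm k L (X 2)}).IsPrincipal := by
  haveI : IsDomain L :=
    IsLocalization.isDomain_of_le_nonZeroDivisors L (primeCompl_le k (m := m))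
  rintro ⟨b, hb⟩
  have h1 := hb.le (Ideal.subset_span (Set.mem_insert _ _) :
    fm k L (X 1) ∈ Ideal.span {fm k L (X 1), fm k L (X 2)})
  have h2 := hb.le (Ideal.subset_span (Set.mem_insert_of_mem _ rfl) :
    fm k L (X 2) ∈ Ideal.span {fm k L (X 1), fm k L (X 2)})
  obtain ⟨c, hc⟩ := Ideal.mem_span_singleton.mp h1
  obtain ⟨d, hd⟩ := Ideal.mem_span_singleton.mp h2
  have hbmem : b ∈ Ideal.span {fm k L (X 1), fm k L (X 2)} :=
    hb.ge (Submodule.mem_span_singleton_self b)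
  rw [Ideal.mem_span_insert] at hbmem
  obtain ⟨e, z, hz, hbe⟩ := hbmem
  obtain ⟨f, hf⟩ := Ideal.mem_span_singleton.mp hz
  rw [hf, hc, hd] at hbe
  have hkey : b * (1 - (e * c + d * f)) = 0 := by
    linear_combination hbe
  rcases mul_eq_zero.mp hkey with h0 | h0
  · rw [h0, zero_mul] at hc
    exact fm_X_ne_zero k (m := m) 1 hc
  · have hone : e * c + d * f = 1 := by
      have := sub_eq_zero.mp h0
      linear_combination -this
    rcases IsLocalRing.isUnit_or_isUnit_of_add_one (R := L) hone with hu | hu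
    · have hcu : IsUnit c := isUnit_of_mul_isUnit_right hu
      exact fmX_not_dvd k hm (i := 1) (j := 2) (by decide)
        (Set.mem_insert_of_mem _ (Set.mem_insert _ _))
        ⟨↑hcu.unit⁻¹ * d, by
          rw [hd, hc]
          rw [show b * c * (↑hcu.unit⁻¹ * d) = (c * ↑hcu.unit⁻¹) * (b * d) from by ring,
            hcu.mul_val_inv, one_mul]⟩
    · have hdu : IsUnit d := isUnit_of_mul_isUnit_left hu
      exact fmX_not_dvd k hm (i := 2) (j := 1) (by decide)
        (Set.mem_insert_of_mem _ (Set.mem_insert_of_mem _ rfl))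
        ⟨↑hdu.unit⁻¹ * c, by
          rw [hc, hd]
          rw [show b * d * (↑hdu.unit⁻¹ * c) = (d * ↑hdu.unit⁻¹) * (b * c) from by ring,
            hdu.mul_val_inv, one_mul]⟩

lemma sigma_base' (a : k) : sigma k m L hm (baseHom k L a) = baseHom k L a := by
  rw [sigma_apply, sigEndo_base]

lemma sigma_Zel' : sigma k m L hm (Zel k L) = Zel k L + fm k L (X 1) := by
  rw [sigma_apply, sigEndo_Zel]

lemma sigma_X0' : sigma k m L hm (fm k L (X 0)) = fm k L (X 0) + fm k L (X 2) := by
  rw [sigma_apply, sigEndo_X0]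

lemma sigma_X1' : sigma k m L hm (fm k L (X 1)) = fm k L (X 1) := by
  rw [sigma_apply, sigEndo_X1]

lemma sigma_X2' : sigma k m L hm (fm k L (X 2)) = fm k L (X 2) := by
  rw [sigma_apply, sigEndo_X2]

end Main

end WildAux

open MvPolynomial IsLocalRing in
/-- The example: over `B = k(Z)[Y, X₁, X₂]` localized at `(Y, X₁, X₂)` (with `k`
of characteristic `p > 0`), the order-`p` automorphism `σ` with `σ(Z) = Z + X₁`,
`σ(Y) = Y + X₂`, `σ(Xᵢ) = Xᵢ`, `σ|k = id` acts by local automorphisms, acts as a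
pseudo-reflection, but its augmentation ideal `I_G = B·X₁ + B·X₂` is not
principal. -/
theorem wild_pseudo_reflection_example
    (k : Type) [Field k] (p : ℕ) (hp : p.Prime) [CharP k p]
    (m : Ideal (PolyS k)) (hm : m = Ideal.span {X 0, X 1, X 2}) [m.IsPrime]
    (φ : PolyS k →+* Localization.AtPrime m)
    (hφ : φ = algebraMap (PolyS k) (Localization.AtPrime m)) :
    ∃ σ : Localization.AtPrime m ≃+* Localization.AtPrime m,
      -- σ fixes (the image of) k
      (∀ c : k, σ (φ (C (algebraMap (Polynomial k) (RatFunc' k) (Polynomial.C c)))) =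
        φ (C (algebraMap (Polynomial k) (RatFunc' k) (Polynomial.C c)))) ∧
      -- σ(Z) = Z + X₁
      σ (φ (C (algebraMap (Polynomial k) (RatFunc' k) Polynomial.X))) =
        φ (C (algebraMap (Polynomial k) (RatFunc' k) Polynomial.X)) + φ (X 1) ∧
      -- σ(Y) = Y + X₂, σ(X₁) = X₁, σ(X₂) = X₂
      σ (φ (X 0)) = φ (X 0) + φ (X 2) ∧
      σ (φ (X 1)) = φ (X 1) ∧
      σ (φ (X 2)) = φ (X 2) ∧
      -- σ has order p
      orderOf σ = p ∧
      -- σ is a local automorphism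
      (∀ b ∈ maximalIdeal (Localization.AtPrime m),
        σ b ∈ maximalIdeal (Localization.AtPrime m)) ∧
      -- pseudo-reflection: (Y, X₁, X₂) is a system of parameters, X₁, X₂ invariant
      Ideal.span {φ (X 0), φ (X 1), φ (X 2)} = maximalIdeal (Localization.AtPrime m) ∧
      -- the augmentation ideal equals B·X₁ + B·X₂ and is not principal
      Ideal.span {x | ∃ (n : ℕ) (b : Localization.AtPrime m), x = (σ ^ n) b - b} =
        Ideal.span {φ (X 1), φ (X 2)} ∧
      ¬ (Ideal.span
          {x | ∃ (n : ℕ) (b : Localization.AtPrime m), x = (σ ^ n) b - b}).IsPrincipal := by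
  subst hφ
  refine ⟨WildAux.sigma k m (Localization.AtPrime m) hm, ?_, ?_, ?_, ?_, ?_, ?_, ?_, ?_, ?_, ?_⟩
  · intro c
    exact WildAux.sigma_base' k (L := Localization.AtPrime m) hm c
  · exact WildAux.sigma_Zel' k (L := Localization.AtPrime m) hm
  · exact WildAux.sigma_X0' k (L := Localization.AtPrime m) hm
  · exact WildAux.sigma_X1' k (L := Localization.AtPrime m) hm
  · exact WildAux.sigma_X2' k (L := Localization.AtPrime m) hm
  · exact WildAux.sigma_orderOf k (L := Localization.AtPrime m) hm p hp
  · exact fun b hb => WildAux.sigma_mem_max k (L := Localization.AtPrime m) hm b hb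
  · exact WildAux.span_X_eq_max k (L := Localization.AtPrime m) hm
  · exact WildAux.aug_ideal_eq k (L := Localization.AtPrime m) hm
  · intro hpr
    obtain ⟨b, hb⟩ := hpr
    apply WildAux.not_principal k (L := Localization.AtPrime m) hm
    exact ⟨b, by rw [← WildAux.aug_ideal_eq k hm]; exact hb⟩
end
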